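/- arXiv:2004.00928 — 6 statements merged into one kernel-verified Lean document; each statement's English description precedes it below -/
import Mathlib

section
/- Let f be a continuous map of a compact metric space M preserving an ergodic Borel probability measure μ. Suppose D ⊆ M is a closed set with μ(D) > 0. Let μ_D be the normalized restriction μ_D(B) = μ(B ∩ D)/μ(D), and let E = {x ∈ supp(μ_D) : the closure of 𝒪(x) ∩ supp(μ_D) equals supp(μ_D)}, where 𝒪(x) = {f^n(x) : n ≥ 0} is the forward orbit of x. Then μ(E) = μ(supp(μ_D)) = μ(D). -/
open MeasureTheory Filter Topology

/-- The topological support of a measure: the set of points all of whose open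
neighborhoods have positive measure. -/
def measSupp {M : Type*} [TopologicalSpace M] [MeasurableSpace M] (ν : Measure M) : Set M :=
  {x : M | ∀ U : Set M, IsOpen U → x ∈ U → 0 < ν U}

/-- The forward orbit of a point. -/
def fwdOrbit {M : Type*} (f : M → M) (x : M) : Set M :=
  {y : M | ∃ n : ℕ, f^[n] x = y}

/-- Let `f` be a continuous map of a compact metric space `M` preserving an
ergodic Borel probability measure `μ`. Suppose `D ⊆ M` is a closed set with `μ(D) > 0`.
Let `μ_D` be the normalized restriction, and let
`E = {x ∈ supp(μ_D) : closure (𝒪(x) ∩ supp(μ_D)) = supp(μ_D)}`.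
Then `μ(E) = μ(supp(μ_D)) = μ(D)`. -/
theorem stmt0 {M : Type*} [MetricSpace M] [CompactSpace M] [MeasurableSpace M] [BorelSpace M]
    (f : M → M) (hf : Continuous f)
    (μ : Measure M) [IsProbabilityMeasure μ] (herg : Ergodic f μ)
    (D : Set M) (hDclosed : IsClosed D) (hDpos : 0 < μ D)
    (μD : Measure M) (hμD : μD = (μ D)⁻¹ • μ.restrict D)
    (E : Set M)
    (hE : E = {x ∈ measSupp μD | closure (fwdOrbit f x ∩ measSupp μD) = measSupp μD}) :
    μ E = μ (measSupp μD) ∧ μ (measSupp μD) = μ D := by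
  set S := measSupp μD with hS
  -- basic formula for μD
  have hμDapp : ∀ A : Set M, μD A = (μ D)⁻¹ * μ (A ∩ D) := by
    intro A
    rw [hμD, Measure.smul_apply, smul_eq_mul, Measure.restrict_apply' hDclosed.measurableSet]
  have hinv_ne : (μ D)⁻¹ ≠ 0 := ENNReal.inv_ne_zero.mpr (measure_ne_top μ D)
  have hμDpos : ∀ A : Set M, 0 < μD A ↔ 0 < μ (A ∩ D) := by
    intro A
    rw [hμDapp A, pos_iff_ne_zero, pos_iff_ne_zero, Ne, Ne, mul_eq_zero]
    simp [hinv_ne]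
  -- S is closed
  have hSclosed : IsClosed S := by
    rw [← isOpen_compl_iff, isOpen_iff_forall_mem_open]
    intro x hx
    simp only [Set.mem_compl_iff, hS, measSupp, Set.mem_setOf_eq, not_forall] at hx
    obtain ⟨U, hU, hxU, hμU⟩ := hx
    refine ⟨U, fun y hy hyS => ?_, hU, hxU⟩
    exact hμU (hyS U hU hy)
  have hSmeas : MeasurableSet S := hSclosed.measurableSet
  -- S ⊆ D
  have hSD : S ⊆ D := by
    intro x hx
    by_contra hxD
    have := hx Dᶜ hDclosed.isOpen_compl hxD
    rw [hμDpos] at this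
    simp at this
  -- μ (Sᶜ ∩ D) = 0
  have hnull : μ (Sᶜ ∩ D) = 0 := by
    have h0 : μD Sᶜ = 0 := by
      refine measure_null_of_locally_null _ fun x hx => ?_
      simp only [Set.mem_compl_iff, hS, measSupp, Set.mem_setOf_eq, not_forall] at hx
      obtain ⟨U, hU, hxU, hμU⟩ := hx
      exact ⟨U, mem_nhdsWithin_of_mem_nhds (hU.mem_nhds hxU),
        by simpa [pos_iff_ne_zero, not_not] using hμU⟩
    rw [hμDapp] at h0
    rcases mul_eq_zero.mp h0 with h | h
    · exact absurd h hinv_ne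
    · exact h
  -- μ S = μ D
  have hμS : μ S = μ D := by
    refine le_antisymm (measure_mono hSD) ?_
    have hcover : D ⊆ (S ∩ D) ∪ (Sᶜ ∩ D) := by
      intro d hd
      by_cases h : d ∈ S
      · exact Or.inl ⟨h, hd⟩
      · exact Or.inr ⟨h, hd⟩
    calc μ D ≤ μ (S ∩ D) + μ (Sᶜ ∩ D) := (measure_mono hcover).trans (measure_union_le _ _)
      _ = μ (S ∩ D) := by rw [hnull, add_zero]
      _ ≤ μ S := measure_mono Set.inter_subset_left
  -- positivity transfer: μD U > 0 → μ (U ∩ S) > 0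
  have hposS : ∀ U : Set M, 0 < μD U → 0 < μ (U ∩ S) := by
    intro U hU
    rw [hμDpos] at hU
    have hcover : U ∩ D ⊆ (U ∩ S) ∪ (Sᶜ ∩ D) := by
      rintro d ⟨hdU, hdD⟩
      by_cases h : d ∈ S
      · exact Or.inl ⟨hdU, h⟩
      · exact Or.inr ⟨h, hdD⟩
    have := (measure_mono (μ := μ) hcover).trans (measure_union_le _ _)
    rw [hnull, add_zero] at this
    exact lt_of_lt_of_le hU this
  -- the "hitting sets"
  set W : Set M → Set M := fun U => ⋃ n : ℕ, f^[n] ⁻¹' (U ∩ S) with hW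
  have hWmeas : ∀ U : Set M, IsOpen U → MeasurableSet (W U) :=
    fun U hU => MeasurableSet.iUnion fun n =>
      (hU.measurableSet.inter hSmeas).preimage (hf.iterate n).measurable
  have hWfull : ∀ U : Set M, IsOpen U → 0 < μ (U ∩ S) → μ (W U) = 1 := by
    intro U hU hpos
    have hsub : f ⁻¹' (W U) ⊆ W U := by
      rw [hW]
      simp only [Set.preimage_iUnion]
      refine Set.iUnion_subset fun n => ?_
      intro x hx
      exact Set.mem_iUnion.mpr ⟨n + 1, by
        rwa [Set.mem_preimage, Function.iterate_succ_apply] ⟩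
    rcases herg.ae_empty_or_univ_of_preimage_ae_le (hWmeas U hU).nullMeasurableSet
        hsub.eventuallyLE with h | h
    · exfalso
      have h0 : μ (W U) = 0 := by
        rw [measure_congr h, measure_empty]
      have : U ∩ S ⊆ W U := by
        intro x hx
        exact Set.mem_iUnion.mpr ⟨0, by simpa using hx⟩
      have := (measure_mono this).trans_eq h0
      exact absurd (le_antisymm this bot_le) (ne_of_gt hpos)
    · rw [measure_congr h, measure_univ]
  -- the countable basis
  set 𝒰 := TopologicalSpace.countableBasis M with h𝒰
  set 𝒢 : Set (Set M) := {U ∈ 𝒰 | 0 < μ (U ∩ S)} with h𝒢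
  have h𝒢count : 𝒢.Countable :=
    (TopologicalSpace.countable_countableBasis M).mono fun U hU => hU.1
  set G : Set M := ⋂ U ∈ 𝒢, W U with hG
  have hGfull : μ Gᶜ = 0 := by
    rw [hG, Set.compl_iInter₂]
    refine (measure_biUnion_null_iff h𝒢count).mpr fun U hU => ?_
    have hUopen : IsOpen U := TopologicalSpace.isOpen_of_mem_countableBasis hU.1
    have h1 : μ (W U) = 1 := hWfull U hUopen hU.2
    rw [measure_compl (hWmeas U hUopen) (measure_ne_top μ _), h1, measure_univ, tsub_self]
  -- the good set
  have hFE : S ∩ G ⊆ E := by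
    rintro x ⟨hxS, hxG⟩
    rw [hE]
    refine ⟨hxS, ?_⟩
    refine subset_antisymm (closure_minimal Set.inter_subset_right hSclosed) ?_
    intro y hy
    rw [(TopologicalSpace.isBasis_countableBasis M).mem_closure_iff]
    intro U hU hyU
    have hUopen : IsOpen U := TopologicalSpace.isOpen_of_mem_countableBasis hU
    have hpos : 0 < μ (U ∩ S) := hposS U (hy U hUopen hyU)
    have hxW : x ∈ W U := by
      have : U ∈ 𝒢 := ⟨hU, hpos⟩
      exact Set.mem_iInter₂.mp hxG U this
    obtain ⟨n, hn⟩ := Set.mem_iUnion.mp hxW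
    exact ⟨f^[n] x, hn.1, ⟨n, rfl⟩, hn.2⟩
  have hES : E ⊆ S := by rw [hE]; exact fun x hx => hx.1
  have hμF : μ (S ∩ G) = μ S := measure_inter_conull hGfull
  refine ⟨le_antisymm (measure_mono hES) ?_, hμS⟩
  calc μ S = μ (S ∩ G) := hμF.symm
    _ ≤ μ E := measure_mono hFE
end

section
/- Let M be a compact metric space, f: M → M a continuous map preserving an ergodic Borel probability measure μ, X a real Banach space, and A: M → GL(X) continuous with respect to d. If there exists a μ-continuous map C: M → GL(X) such that A(x) = C(f x) ∘ C(x)⁻¹ for μ-a.e. x ∈ M, then λ₊(𝒜,μ) = λ₋(𝒜,μ) = 0. -/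
open MeasureTheory Filter Topology

section GLspace

variable {X : Type*} [NormedAddCommGroup X] [NormedSpace ℝ X]

/-- The metric `d(A,B) = ‖A − B‖ + ‖A⁻¹ − B⁻¹‖` on the group `GL(X)` of invertible bounded
linear operators on `X` (formalized as continuous linear equivalences `X ≃L[ℝ] X`). -/
noncomputable instance glMetricSpace : MetricSpace (X ≃L[ℝ] X) where
  dist A B := ‖(A : X →L[ℝ] X) - (B : X →L[ℝ] X)‖ +
    ‖(A.symm : X →L[ℝ] X) - (B.symm : X →L[ℝ] X)‖
  dist_self A := by simp
  dist_comm A B := by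
    simp only [norm_sub_rev ((A : X →L[ℝ] X)), norm_sub_rev ((A.symm : X →L[ℝ] X))]
  dist_triangle A B C := by
    have h1 : ‖(A : X →L[ℝ] X) - (C : X →L[ℝ] X)‖ ≤
        ‖(A : X →L[ℝ] X) - (B : X →L[ℝ] X)‖ + ‖(B : X →L[ℝ] X) - (C : X →L[ℝ] X)‖ :=
      norm_sub_le_norm_sub_add_norm_sub _ _ _
    have h2 : ‖(A.symm : X →L[ℝ] X) - (C.symm : X →L[ℝ] X)‖ ≤
        ‖(A.symm : X →L[ℝ] X) - (B.symm : X →L[ℝ] X)‖ +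
        ‖(B.symm : X →L[ℝ] X) - (C.symm : X →L[ℝ] X)‖ :=
      norm_sub_le_norm_sub_add_norm_sub _ _ _
    try dsimp only
    linarith
  eq_of_dist_eq_zero := by
    intro A B h
    try dsimp only at h
    have h1 : ‖(A : X →L[ℝ] X) - (B : X →L[ℝ] X)‖ = 0 := by
      have := norm_nonneg ((A : X →L[ℝ] X) - (B : X →L[ℝ] X))
      have := norm_nonneg ((A.symm : X →L[ℝ] X) - (B.symm : X →L[ℝ] X))
      linarith
    have h2 : (A : X →L[ℝ] X) = (B : X →L[ℝ] X) := by
      rwa [norm_eq_zero, sub_eq_zero] at h1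
    exact ContinuousLinearEquiv.coe_injective h2

/-- The Borel σ-algebra of `(GL(X), d)`. -/
noncomputable instance : MeasurableSpace (X ≃L[ℝ] X) := borel _
instance : BorelSpace (X ≃L[ℝ] X) := ⟨rfl⟩

end GLspace

variable {M : Type*} {X : Type*} [NormedAddCommGroup X] [NormedSpace ℝ X]

/-- The cocycle generated by `A` over `f`: `𝒜ₓⁿ = A(f^{n-1}x) ∘ ⋯ ∘ A(fx) ∘ A(x)` for `n ≥ 1`
and `𝒜ₓ⁰ = Id`. -/
def coc (f : M → M) (A : M → (X ≃L[ℝ] X)) : ℕ → M → (X ≃L[ℝ] X)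
  | 0, _ => 1
  | n + 1, x => coc f A n (f x) * A x

/-- `C : M → G` is `μ`-continuous: there are compact sets `Kₙ ⊆ M` with `μ(⋃ₙ Kₙ) = 1`
such that the restriction of `C` to each `Kₙ` is continuous. -/
def MuContinuous [TopologicalSpace M] [MeasurableSpace M] (μ : Measure M) {G : Type*}
    [TopologicalSpace G] (C : M → G) : Prop :=
  ∃ K : ℕ → Set M, (∀ n, IsCompact (K n)) ∧ μ (⋃ n, K n) = 1 ∧ ∀ n, ContinuousOn C (K n)

open scoped ENNReal NNReal

/-! ### Auxiliary lemmas -/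

lemma gl_dist_eq (a b : X ≃L[ℝ] X) : dist a b = ‖(a : X →L[ℝ] X) - (b : X →L[ℝ] X)‖ +
    ‖(a.symm : X →L[ℝ] X) - (b.symm : X →L[ℝ] X)‖ := rfl

lemma continuous_coeCLM : Continuous (fun e : X ≃L[ℝ] X => (e : X →L[ℝ] X)) := by
  refine (LipschitzWith.of_dist_le_mul (K := 1) fun a b => ?_).continuous
  rw [NNReal.coe_one, one_mul, dist_eq_norm, gl_dist_eq]
  exact le_add_of_nonneg_right (norm_nonneg _)

lemma continuous_symmCLM : Continuous (fun e : X ≃L[ℝ] X => (e.symm : X →L[ℝ] X)) := by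
  refine (LipschitzWith.of_dist_le_mul (K := 1) fun a b => ?_).continuous
  rw [NNReal.coe_one, one_mul, dist_eq_norm, gl_dist_eq]
  exact le_add_of_nonneg_left (norm_nonneg _)

lemma coc_coe_succ (f : M → M) (A : M → (X ≃L[ℝ] X)) (n : ℕ) (x : M) :
    ((coc f A (n + 1) x : X ≃L[ℝ] X) : X →L[ℝ] X) =
      ((coc f A n (f x) : X ≃L[ℝ] X) : X →L[ℝ] X) ∘L ((A x : X ≃L[ℝ] X) : X →L[ℝ] X) := rfl

lemma coc_inv_succ (f : M → M) (A : M → (X ≃L[ℝ] X)) (n : ℕ) (x : M) :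
    (((coc f A (n + 1) x)⁻¹ : X ≃L[ℝ] X) : X →L[ℝ] X) =
      (((A x)⁻¹ : X ≃L[ℝ] X) : X →L[ℝ] X) ∘L
        (((coc f A n (f x))⁻¹ : X ≃L[ℝ] X) : X →L[ℝ] X) := by
  show (((coc f A n (f x) * A x)⁻¹ : X ≃L[ℝ] X) : X →L[ℝ] X) = _
  rw [mul_inv_rev]
  rfl

lemma continuous_coc [TopologicalSpace M] {f : M → M} {A : M → (X ≃L[ℝ] X)}
    (hf : Continuous f) (hA : Continuous A) (n : ℕ) :
    Continuous (fun x => ((coc f A n x : X ≃L[ℝ] X) : X →L[ℝ] X)) := by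
  induction n with
  | zero => simp only [coc]; exact continuous_const
  | succ n ih =>
    simp only [coc_coe_succ]
    exact (ih.comp hf).clm_comp (continuous_coeCLM.comp hA)

lemma continuous_coc_inv [TopologicalSpace M] {f : M → M} {A : M → (X ≃L[ℝ] X)}
    (hf : Continuous f) (hA : Continuous A) (n : ℕ) :
    Continuous (fun x => (((coc f A n x)⁻¹ : X ≃L[ℝ] X) : X →L[ℝ] X)) := by
  induction n with
  | zero => simp only [coc]; exact continuous_const
  | succ n ih =>
    simp only [coc_inv_succ]
    exact (continuous_symmCLM.comp hA).clm_comp (ih.comp hf)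

lemma norm_coc_le {f : M → M} {A : M → (X ≃L[ℝ] X)} {c : ℝ} (hc1 : 1 ≤ c)
    (hc : ∀ x, ‖((A x : X ≃L[ℝ] X) : X →L[ℝ] X)‖ ≤ c) (n : ℕ) (x : M) :
    ‖((coc f A n x : X ≃L[ℝ] X) : X →L[ℝ] X)‖ ≤ c ^ n := by
  induction n generalizing x with
  | zero => rw [pow_zero]; exact ContinuousLinearMap.norm_id_le
  | succ n ih =>
    rw [coc_coe_succ]
    calc ‖((coc f A n (f x) : X ≃L[ℝ] X) : X →L[ℝ] X) ∘L ((A x : X ≃L[ℝ] X) : X →L[ℝ] X)‖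
        ≤ ‖((coc f A n (f x) : X ≃L[ℝ] X) : X →L[ℝ] X)‖ * ‖((A x : X ≃L[ℝ] X) : X →L[ℝ] X)‖ :=
          ContinuousLinearMap.opNorm_comp_le _ _
      _ ≤ c ^ n * c := by
          apply mul_le_mul (ih (f x)) (hc x) (norm_nonneg _) (pow_nonneg (by linarith) n)
      _ = c ^ (n + 1) := (pow_succ c n).symm

lemma norm_coc_inv_le {f : M → M} {A : M → (X ≃L[ℝ] X)} {c : ℝ} (hc1 : 1 ≤ c)
    (hc : ∀ x, ‖(((A x)⁻¹ : X ≃L[ℝ] X) : X →L[ℝ] X)‖ ≤ c) (n : ℕ) (x : M) :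
    ‖(((coc f A n x)⁻¹ : X ≃L[ℝ] X) : X →L[ℝ] X)‖ ≤ c ^ n := by
  induction n generalizing x with
  | zero => rw [pow_zero]; exact ContinuousLinearMap.norm_id_le
  | succ n ih =>
    rw [coc_inv_succ]
    calc ‖(((A x)⁻¹ : X ≃L[ℝ] X) : X →L[ℝ] X) ∘L (((coc f A n (f x))⁻¹ : X ≃L[ℝ] X) : X →L[ℝ] X)‖
        ≤ ‖(((A x)⁻¹ : X ≃L[ℝ] X) : X →L[ℝ] X)‖ *
            ‖(((coc f A n (f x))⁻¹ : X ≃L[ℝ] X) : X →L[ℝ] X)‖ :=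
          ContinuousLinearMap.opNorm_comp_le _ _
      _ ≤ c * c ^ n := by
          apply mul_le_mul (hc x) (ih (f x)) (norm_nonneg _) (by linarith)
      _ = c ^ (n + 1) := by ring

lemma one_le_norm_mul_norm_inv [Nontrivial X] (e : X ≃L[ℝ] X) :
    (1 : ℝ) ≤ ‖(e : X →L[ℝ] X)‖ * ‖((e⁻¹ : X ≃L[ℝ] X) : X →L[ℝ] X)‖ := by
  have h : ((e : X ≃L[ℝ] X) : X →L[ℝ] X) ∘L ((e⁻¹ : X ≃L[ℝ] X) : X →L[ℝ] X) =
      ContinuousLinearMap.id ℝ X := by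
    have : (e * e⁻¹ : X ≃L[ℝ] X) = 1 := mul_inv_cancel e
    calc ((e : X ≃L[ℝ] X) : X →L[ℝ] X) ∘L ((e⁻¹ : X ≃L[ℝ] X) : X →L[ℝ] X)
        = ((e * e⁻¹ : X ≃L[ℝ] X) : X →L[ℝ] X) := rfl
      _ = _ := by rw [this]; rfl
  calc (1 : ℝ) = ‖ContinuousLinearMap.id ℝ X‖ := ContinuousLinearMap.norm_id.symm
    _ = ‖((e : X ≃L[ℝ] X) : X →L[ℝ] X) ∘L ((e⁻¹ : X ≃L[ℝ] X) : X →L[ℝ] X)‖ := by rw [h]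
    _ ≤ _ := ContinuousLinearMap.opNorm_comp_le _ _

lemma glnorm_pos [Nontrivial X] (e : X ≃L[ℝ] X) : (0 : ℝ) < ‖(e : X →L[ℝ] X)‖ := by
  rcases (norm_nonneg (e : X →L[ℝ] X)).lt_or_eq with h | h
  · exact h
  · exfalso
    have := one_le_norm_mul_norm_inv e
    rw [← h, zero_mul] at this
    linarith

lemma glnorm_inv_pos [Nontrivial X] (e : X ≃L[ℝ] X) :
    (0 : ℝ) < ‖((e⁻¹ : X ≃L[ℝ] X) : X →L[ℝ] X)‖ := glnorm_pos _

lemma log_add_log_inv_nonneg [Nontrivial X] (e : X ≃L[ℝ] X) :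
    0 ≤ Real.log ‖(e : X →L[ℝ] X)‖ + Real.log ‖((e⁻¹ : X ≃L[ℝ] X) : X →L[ℝ] X)‖ := by
  rw [← Real.log_mul (glnorm_pos e).ne' (glnorm_inv_pos e).ne']
  exact Real.log_nonneg (one_le_norm_mul_norm_inv e)

lemma gl_norm_mul_le (a b : X ≃L[ℝ] X) :
    ‖((a * b : X ≃L[ℝ] X) : X →L[ℝ] X)‖ ≤ ‖(a : X →L[ℝ] X)‖ * ‖(b : X →L[ℝ] X)‖ := by
  have h : ((a * b : X ≃L[ℝ] X) : X →L[ℝ] X) = (a : X →L[ℝ] X) ∘L (b : X →L[ℝ] X) := rfl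
  rw [h]
  exact ContinuousLinearMap.opNorm_comp_le _ _

lemma coc_eq_of_cob {f : M → M} {A C : M → (X ≃L[ℝ] X)} :
    ∀ (n : ℕ) (x : M), (∀ k : ℕ, A (f^[k] x) = C (f^[k + 1] x) * (C (f^[k] x))⁻¹) →
      coc f A n x = C (f^[n] x) * (C x)⁻¹ := by
  intro n
  induction n with
  | zero =>
    intro x _
    simp [coc, Function.iterate_zero_apply, mul_inv_cancel]
  | succ n ih =>
    intro x hx
    have hfx : ∀ k : ℕ, A (f^[k] (f x)) = C (f^[k + 1] (f x)) * (C (f^[k] (f x)))⁻¹ := by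
      intro k
      simp only [← Function.iterate_succ_apply]
      exact hx (k + 1)
    have h0 := hx 0
    simp only [Function.iterate_zero_apply, zero_add, Function.iterate_one] at h0
    show coc f A n (f x) * A x = _
    rw [ih (f x) hfx, h0, ← Function.iterate_succ_apply]
    rw [mul_assoc, inv_mul_cancel_left]

/-- If `A : M → GL(X)` is continuous and there is a `μ`-continuous `C` with
`A(x) = C(fx) ∘ C(x)⁻¹` for `μ`-a.e. `x`, with `μ` an ergodic invariant Borel probability
measure of a continuous map `f` of a compact metric space, then
`λ₊(𝒜,μ) = λ₋(𝒜,μ) = 0`, i.e. `(1/n) ∫ log‖𝒜ₓⁿ‖ dμ → 0` and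
`(1/n) ∫ log‖(𝒜ₓⁿ)⁻¹‖ dμ → 0`. -/
theorem stmt1 {M : Type*} [MetricSpace M] [CompactSpace M] [MeasurableSpace M] [BorelSpace M]
    {X : Type*} [NormedAddCommGroup X] [NormedSpace ℝ X] [CompleteSpace X]
    (f : M → M) (hf : Continuous f)
    (μ : Measure M) [IsProbabilityMeasure μ] (herg : Ergodic f μ)
    (A : M → (X ≃L[ℝ] X)) (hA : Continuous A)
    (C : M → (X ≃L[ℝ] X)) (hC : MuContinuous μ C)
    (hcob : ∀ᵐ x ∂μ, A x = C (f x) * (C x)⁻¹) :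
    Tendsto (fun n : ℕ =>
        (n : ℝ)⁻¹ * ∫ x, Real.log ‖(coc f A n x : X →L[ℝ] X)‖ ∂μ) atTop (𝓝 0) ∧
    Tendsto (fun n : ℕ =>
        (n : ℝ)⁻¹ * ∫ x, Real.log ‖(((coc f A n x)⁻¹ : X ≃L[ℝ] X) : X →L[ℝ] X)‖ ∂μ) atTop (𝓝 0) := by
  rcases subsingleton_or_nontrivial X with hX | hX
  · have h0 : ∀ e : X ≃L[ℝ] X, ‖(e : X →L[ℝ] X)‖ = 0 := fun e => by
      have he : (e : X →L[ℝ] X) = 0 := by ext x; exact Subsingleton.elim _ _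
      rw [he, norm_zero]
    constructor
    · simp only [h0, Real.log_zero, integral_zero, mul_zero]
      exact tendsto_const_nhds
    · simp only [h0, Real.log_zero, integral_zero, mul_zero]
      exact tendsto_const_nhds
  have hM : Nonempty M := by
    by_contra h
    rw [not_nonempty_iff] at h
    have h1 : μ Set.univ = 1 := measure_univ
    rw [Set.univ_eq_empty_iff.mpr h, measure_empty] at h1
    exact zero_ne_one h1
  obtain ⟨c₁, hc₁⟩ := isCompact_univ.exists_bound_of_continuousOn
    (continuous_coeCLM.comp hA).continuousOn
  obtain ⟨c₂, hc₂⟩ := isCompact_univ.exists_bound_of_continuousOn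
    (continuous_symmCLM.comp hA).continuousOn
  set c : ℝ := max 1 (max c₁ c₂) with hc_def
  have hc1 : (1 : ℝ) ≤ c := le_max_left _ _
  have hcA : ∀ x, ‖((A x : X ≃L[ℝ] X) : X →L[ℝ] X)‖ ≤ c := fun x =>
    (hc₁ x (Set.mem_univ x)).trans ((le_max_left c₁ c₂).trans (le_max_right _ _))
  have hcA' : ∀ x, ‖(((A x)⁻¹ : X ≃L[ℝ] X) : X →L[ℝ] X)‖ ≤ c := fun x =>
    (hc₂ x (Set.mem_univ x)).trans ((le_max_right c₁ c₂).trans (le_max_right _ _))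
  have hlogc : 0 ≤ Real.log c := Real.log_nonneg hc1
  have hmp : MeasurePreserving f μ μ := herg.toMeasurePreserving
  have hub : ∀ (n : ℕ) (x : M),
      Real.log ‖((coc f A n x : X ≃L[ℝ] X) : X →L[ℝ] X)‖ ≤ n * Real.log c := fun n x => by
    calc Real.log ‖((coc f A n x : X ≃L[ℝ] X) : X →L[ℝ] X)‖
        ≤ Real.log (c ^ n) := Real.log_le_log (glnorm_pos _) (norm_coc_le hc1 hcA n x)
      _ = n * Real.log c := by rw [Real.log_pow]
  have hub' : ∀ (n : ℕ) (x : M),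
      Real.log ‖(((coc f A n x)⁻¹ : X ≃L[ℝ] X) : X →L[ℝ] X)‖ ≤ n * Real.log c := fun n x => by
    calc Real.log ‖(((coc f A n x)⁻¹ : X ≃L[ℝ] X) : X →L[ℝ] X)‖
        ≤ Real.log (c ^ n) := Real.log_le_log (glnorm_pos _) (norm_coc_inv_le hc1 hcA' n x)
      _ = n * Real.log c := by rw [Real.log_pow]
  have hsum : ∀ (n : ℕ) (x : M),
      0 ≤ Real.log ‖((coc f A n x : X ≃L[ℝ] X) : X →L[ℝ] X)‖ +
        Real.log ‖(((coc f A n x)⁻¹ : X ≃L[ℝ] X) : X →L[ℝ] X)‖ := fun n x =>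
    log_add_log_inv_nonneg _
  have hlb : ∀ (n : ℕ) (x : M),
      -(n * Real.log c) ≤ Real.log ‖((coc f A n x : X ≃L[ℝ] X) : X →L[ℝ] X)‖ := fun n x => by
    linarith [hsum n x, hub' n x]
  have hlb' : ∀ (n : ℕ) (x : M),
      -(n * Real.log c) ≤ Real.log ‖(((coc f A n x)⁻¹ : X ≃L[ℝ] X) : X →L[ℝ] X)‖ := fun n x => by
    linarith [hsum n x, hub n x]
  have hmeas : ∀ n : ℕ, AEStronglyMeasurable
      (fun x => Real.log ‖((coc f A n x : X ≃L[ℝ] X) : X →L[ℝ] X)‖) μ := fun n =>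
    (Real.measurable_log.comp (continuous_coc hf hA n).norm.measurable).aestronglyMeasurable
  have hmeas' : ∀ n : ℕ, AEStronglyMeasurable
      (fun x => Real.log ‖(((coc f A n x)⁻¹ : X ≃L[ℝ] X) : X →L[ℝ] X)‖) μ := fun n =>
    (Real.measurable_log.comp (continuous_coc_inv hf hA n).norm.measurable).aestronglyMeasurable
  have hint : ∀ n : ℕ, Integrable
      (fun x => Real.log ‖((coc f A n x : X ≃L[ℝ] X) : X →L[ℝ] X)‖) μ := fun n =>
    (integrable_const ((n : ℝ) * Real.log c)).mono' (hmeas n) (ae_of_all _ fun x => by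
      rw [Real.norm_eq_abs, abs_le]; exact ⟨hlb n x, hub n x⟩)
  have hint' : ∀ n : ℕ, Integrable
      (fun x => Real.log ‖(((coc f A n x)⁻¹ : X ≃L[ℝ] X) : X →L[ℝ] X)‖) μ := fun n =>
    (integrable_const ((n : ℝ) * Real.log c)).mono' (hmeas' n) (ae_of_all _ fun x => by
      rw [Real.norm_eq_abs, abs_le]; exact ⟨hlb' n x, hub' n x⟩)
  have hS : ∀ᵐ x ∂μ, ∀ k : ℕ, A (f^[k] x) = C (f^[k + 1] x) * (C (f^[k] x))⁻¹ := by
    rw [MeasureTheory.ae_all_iff]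
    intro k
    have h := ((hmp.iterate k).quasiMeasurePreserving).ae hcob
    filter_upwards [h] with x hx
    rw [Function.iterate_succ_apply']
    exact hx
  have hcoc : ∀ n : ℕ, ∀ᵐ x ∂μ, coc f A n x = C (f^[n] x) * (C x)⁻¹ :=
    fun n => hS.mono fun x hx => coc_eq_of_cob n x hx
  obtain ⟨Ks, hKscomp, hKs1, hKscont⟩ := hC
  have hBex : ∀ i : ℕ, ∃ B : ℝ, ∀ x ∈ Ks i, ‖((C x : X ≃L[ℝ] X) : X →L[ℝ] X)‖ ≤ B ∧
      ‖(((C x)⁻¹ : X ≃L[ℝ] X) : X →L[ℝ] X)‖ ≤ B := by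
    intro i
    obtain ⟨B1, hB1⟩ := (hKscomp i).exists_bound_of_continuousOn
      (continuous_coeCLM.comp_continuousOn (hKscont i))
    obtain ⟨B2, hB2⟩ := (hKscomp i).exists_bound_of_continuousOn
      (continuous_symmCLM.comp_continuousOn (hKscont i))
    exact ⟨max B1 B2, fun x hx =>
      ⟨(hB1 x hx).trans (le_max_left _ _), (hB2 x hx).trans (le_max_right _ _)⟩⟩
  choose B hB using hBex
  have key : ∀ δ : ℝ, 0 < δ → ∀ᶠ n : ℕ in atTop,
      |∫ x, Real.log ‖((coc f A n x : X ≃L[ℝ] X) : X →L[ℝ] X)‖ ∂μ| ≤ n * δ ∧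
      |∫ x, Real.log ‖(((coc f A n x)⁻¹ : X ≃L[ℝ] X) : X →L[ℝ] X)‖ ∂μ| ≤ n * δ := by
    intro δ hδ
    set ε : ℝ := δ / (4 * (Real.log c + 1)) with hε_def
    have hε : 0 < ε := by positivity
    have hεq : ε * (4 * (Real.log c + 1)) = δ := div_mul_cancel₀ _ (by positivity)
    have hεlog : 2 * ε * Real.log c ≤ δ / 2 := by nlinarith [hε.le, hlogc]
    set εe : ℝ≥0∞ := ENNReal.ofReal ε with hεe_def
    have hεe : 0 < εe := ENNReal.ofReal_pos.mpr hε
    set Kb : ℕ → Set M := fun N => ⋃ i ∈ Set.Iic N, Ks i with hKb_def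
    have hKbmono : Monotone Kb := fun a b hab =>
      Set.biUnion_subset_biUnion_left (Set.Iic_subset_Iic.mpr hab)
    have hKbU : (⋃ N, Kb N) = ⋃ i, Ks i := by
      apply Set.Subset.antisymm
      · exact Set.iUnion_subset fun N => Set.iUnion₂_subset fun i _ => Set.subset_iUnion Ks i
      · exact Set.iUnion_subset fun i => Set.subset_iUnion_of_subset i
          (Set.subset_biUnion_of_mem (Set.mem_Iic.mpr le_rfl))
    have htend : Tendsto (fun N => μ (Kb N)) atTop (𝓝 1) := by
      have h := tendsto_measure_iUnion_atTop (μ := μ) hKbmono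
      rw [hKbU, hKs1] at h
      exact h
    have hlt : (1 : ℝ≥0∞) - εe < 1 := ENNReal.sub_lt_self ENNReal.one_ne_top one_ne_zero hεe.ne'
    obtain ⟨N, hN⟩ := (htend.eventually (eventually_gt_nhds hlt)).exists
    set K : Set M := Kb N with hK_def
    have hKcomp : IsCompact K := Set.Finite.isCompact_biUnion (Set.finite_Iic N)
      (fun i _ => hKscomp i)
    have hKmeas : MeasurableSet K := hKcomp.isClosed.measurableSet
    have hKcompl : μ Kᶜ ≤ εe := by
      rw [prob_compl_eq_one_sub hKmeas, tsub_le_iff_right]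
      rcases le_total εe 1 with h | h
      · calc (1 : ℝ≥0∞) = 1 - εe + εe := (tsub_add_cancel_of_le h).symm
          _ ≤ μ K + εe := add_le_add hN.le le_rfl
          _ = εe + μ K := add_comm _ _
      · exact le_trans h le_self_add
    set R : ℝ := max 1 ((Finset.Iic N).sup' Finset.nonempty_Iic B) with hR_def
    have hR1 : (1 : ℝ) ≤ R := le_max_left _ _
    have hRlog : 0 ≤ Real.log R := Real.log_nonneg hR1
    have hRC : ∀ x ∈ K, ‖((C x : X ≃L[ℝ] X) : X →L[ℝ] X)‖ ≤ R ∧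
        ‖(((C x)⁻¹ : X ≃L[ℝ] X) : X →L[ℝ] X)‖ ≤ R := by
      intro x hx
      rw [hK_def, hKb_def] at hx
      simp only [Set.mem_iUnion, Set.mem_Iic] at hx
      obtain ⟨i, hiN, hxi⟩ := hx
      have hBi : B i ≤ R :=
        le_trans (Finset.le_sup' B (Finset.mem_Iic.mpr hiN)) (le_max_right _ _)
      exact ⟨(hB i x hxi).1.trans hBi, (hB i x hxi).2.trans hBi⟩
    have hInt : ∀ n : ℕ,
        (∫ x, Real.log ‖((coc f A n x : X ≃L[ℝ] X) : X →L[ℝ] X)‖ ∂μ) ≤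
          n * (δ / 2) + 2 * Real.log R ∧
        (∫ x, Real.log ‖(((coc f A n x)⁻¹ : X ≃L[ℝ] X) : X →L[ℝ] X)‖ ∂μ) ≤
          n * (δ / 2) + 2 * Real.log R := by
      intro n
      set Bad : Set M := Kᶜ ∪ f^[n] ⁻¹' Kᶜ with hBad_def
      have hBadMeas : MeasurableSet Bad :=
        hKmeas.compl.union ((hf.measurable.iterate n) hKmeas.compl)
      have hBadμ : μ Bad ≤ 2 * εe := by
        calc μ Bad ≤ μ Kᶜ + μ (f^[n] ⁻¹' Kᶜ) := measure_union_le _ _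
          _ = μ Kᶜ + μ Kᶜ := by
              rw [(hmp.iterate n).measure_preimage hKmeas.compl.nullMeasurableSet]
          _ ≤ εe + εe := add_le_add hKcompl hKcompl
          _ = 2 * εe := (two_mul εe).symm
      have hBadReal : (μ Bad).toReal ≤ 2 * ε := by
        have h2 : (2 : ℝ≥0∞) * εe ≠ ⊤ :=
          ENNReal.mul_ne_top (by norm_num) ENNReal.ofReal_ne_top
        calc (μ Bad).toReal ≤ ((2 : ℝ≥0∞) * εe).toReal := ENNReal.toReal_mono h2 hBadμ
          _ = 2 * ε := by
              rw [ENNReal.toReal_mul, hεe_def, ENNReal.toReal_ofReal hε.le]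
              norm_num
      set g : M → ℝ := fun x => Bad.indicator (fun _ => (n : ℝ) * Real.log c) x + 2 * Real.log R
        with hg_def
      have hg_int : Integrable g μ :=
        ((integrable_const _).indicator hBadMeas).add (integrable_const _)
      have hg_integral : ∫ x, g x ∂μ =
          (μ Bad).toReal * ((n : ℝ) * Real.log c) + 2 * Real.log R := by
        rw [hg_def, integral_add ((integrable_const _).indicator hBadMeas) (integrable_const _),
          integral_indicator_const _ hBadMeas, integral_const]
        simp [smul_eq_mul, measure_univ, Measure.real]
      have hg_bound : ∫ x, g x ∂μ ≤ n * (δ / 2) + 2 * Real.log R := by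
        rw [hg_integral]
        have h1 : (μ Bad).toReal * ((n : ℝ) * Real.log c) ≤
            (2 * ε) * ((n : ℝ) * Real.log c) :=
          mul_le_mul_of_nonneg_right hBadReal (by positivity)
        have h2 : (2 * ε) * ((n : ℝ) * Real.log c) = (n : ℝ) * (2 * ε * Real.log c) := by ring
        have h3 : (n : ℝ) * (2 * ε * Real.log c) ≤ n * (δ / 2) :=
          mul_le_mul_of_nonneg_left hεlog (Nat.cast_nonneg n)
        linarith
      have hae : ∀ᵐ x ∂μ,
          Real.log ‖((coc f A n x : X ≃L[ℝ] X) : X →L[ℝ] X)‖ ≤ g x ∧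
          Real.log ‖(((coc f A n x)⁻¹ : X ≃L[ℝ] X) : X →L[ℝ] X)‖ ≤ g x := by
        filter_upwards [hcoc n] with x hx
        by_cases hxB : x ∈ Bad
        · have hgx : g x = (n : ℝ) * Real.log c + 2 * Real.log R := by
            rw [hg_def]; simp [Set.indicator_of_mem hxB]
          rw [hgx]
          exact ⟨by linarith [hub n x], by linarith [hub' n x]⟩
        · have hgx : g x = 2 * Real.log R := by
            rw [hg_def]; simp [Set.indicator_of_notMem hxB]
          have hxK : x ∈ K ∧ f^[n] x ∈ K := by
            rw [hBad_def] at hxB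
            simp only [Set.mem_union, Set.mem_compl_iff, Set.mem_preimage, not_or, not_not]
              at hxB
            exact hxB
          have hn1 : ‖((coc f A n x : X ≃L[ℝ] X) : X →L[ℝ] X)‖ ≤ R * R := by
            rw [hx]
            exact le_trans (gl_norm_mul_le _ _)
              (mul_le_mul (hRC _ hxK.2).1 (hRC _ hxK.1).2 (norm_nonneg _) (by linarith))
          have hn2 : ‖(((coc f A n x)⁻¹ : X ≃L[ℝ] X) : X →L[ℝ] X)‖ ≤ R * R := by
            rw [hx, mul_inv_rev, inv_inv]
            exact le_trans (gl_norm_mul_le _ _)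
              (mul_le_mul (hRC _ hxK.1).1 (hRC _ hxK.2).2 (norm_nonneg _) (by linarith))
          have hRR : Real.log (R * R) = 2 * Real.log R := by
            rw [Real.log_mul (by linarith) (by linarith)]; ring
          rw [hgx]
          exact ⟨by rw [← hRR]; exact Real.log_le_log (glnorm_pos _) hn1,
                 by rw [← hRR]; exact Real.log_le_log (glnorm_pos _) hn2⟩
      constructor
      · exact le_trans (integral_mono_ae (hint n) hg_int (hae.mono fun x h => h.1)) hg_bound
      · exact le_trans (integral_mono_ae (hint' n) hg_int (hae.mono fun x h => h.2)) hg_bound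
    have hsumInt : ∀ n : ℕ, 0 ≤
        (∫ x, Real.log ‖((coc f A n x : X ≃L[ℝ] X) : X →L[ℝ] X)‖ ∂μ) +
        (∫ x, Real.log ‖(((coc f A n x)⁻¹ : X ≃L[ℝ] X) : X →L[ℝ] X)‖ ∂μ) := fun n => by
      rw [← integral_add (hint n) (hint' n)]
      exact integral_nonneg fun x => hsum n x
    have habs : ∀ n : ℕ,
        |∫ x, Real.log ‖((coc f A n x : X ≃L[ℝ] X) : X →L[ℝ] X)‖ ∂μ| ≤
          n * (δ / 2) + 2 * Real.log R ∧
        |∫ x, Real.log ‖(((coc f A n x)⁻¹ : X ≃L[ℝ] X) : X →L[ℝ] X)‖ ∂μ| ≤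
          n * (δ / 2) + 2 * Real.log R := fun n => by
      obtain ⟨h1, h2⟩ := hInt n
      have h3 := hsumInt n
      constructor
      · rw [abs_le]; constructor <;> linarith
      · rw [abs_le]; constructor <;> linarith
    have hev : ∀ᶠ n : ℕ in atTop, 2 * Real.log R ≤ (n : ℝ) * (δ / 2) := by
      have hT : Tendsto (fun n : ℕ => ((n : ℝ) * (δ / 2))) atTop atTop :=
        tendsto_natCast_atTop_atTop.atTop_mul_const' (by positivity)
      exact hT.eventually_ge_atTop _
    filter_upwards [hev] with n hn
    obtain ⟨h1, h2⟩ := habs n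
    constructor
    · calc |∫ x, Real.log ‖((coc f A n x : X ≃L[ℝ] X) : X →L[ℝ] X)‖ ∂μ|
          ≤ n * (δ / 2) + 2 * Real.log R := h1
        _ ≤ n * (δ / 2) + n * (δ / 2) := by linarith
        _ = n * δ := by ring
    · calc |∫ x, Real.log ‖(((coc f A n x)⁻¹ : X ≃L[ℝ] X) : X →L[ℝ] X)‖ ∂μ|
          ≤ n * (δ / 2) + 2 * Real.log R := h2
        _ ≤ n * (δ / 2) + n * (δ / 2) := by linarith
        _ = n * δ := by ring
  have conv : ∀ u : ℕ → ℝ, (∀ δ : ℝ, 0 < δ → ∀ᶠ n : ℕ in atTop, |u n| ≤ n * δ) →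
      Tendsto (fun n : ℕ => (n : ℝ)⁻¹ * u n) atTop (𝓝 0) := by
    intro u hu
    rw [Metric.tendsto_atTop]
    intro δ hδ
    obtain ⟨N, hN⟩ := eventually_atTop.mp (hu (δ / 2) (by positivity))
    refine ⟨max N 1, fun n hn => ?_⟩
    have hn1 : 1 ≤ n := le_trans (le_max_right N 1) hn
    have hnN : N ≤ n := le_trans (le_max_left N 1) hn
    have hnpos : (0 : ℝ) < n := by exact_mod_cast hn1
    rw [Real.dist_eq, sub_zero, abs_mul, abs_inv, abs_of_pos hnpos]
    calc ((n : ℝ))⁻¹ * |u n| ≤ ((n : ℝ))⁻¹ * ((n : ℝ) * (δ / 2)) :=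
          mul_le_mul_of_nonneg_left (hN n hnN) (by positivity)
      _ = δ / 2 := by field_simp
      _ < δ := by linarith
  constructor
  · exact conv _ (fun δ hδ => (key δ hδ).mono fun n h => h.1)
  · exact conv _ (fun δ hδ => (key δ hδ).mono fun n h => h.2)
end

section
/- Let M be a compact metric space, f: M → M a homeomorphism, ν an ergodic f-invariant Borel probability measure, X a real Banach space, and A: M → GL(X) continuous with respect to d. Let K be the closure in (GL(X), d) of ⋃_{n∈ℤ} {𝒜_x^n : x ∈ M}. Suppose C: M → GL(X) is ν-continuous and satisfies A(x) = C(f x) ∘ C(x)⁻¹ for ν-a.e. x ∈ M. Then there exists B ∈ GL(X) such that C(y) ∘ B ∈ K for ν-a.e. y ∈ M. -/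
open MeasureTheory Filter Topology

variable {M : Type*} {X : Type*} [NormedAddCommGroup X] [NormedSpace ℝ X]

/-- The two-sided cocycle over a homeomorphism: `𝒜ₓⁿ` for `n ≥ 0` and
`𝒜ₓ^{-n} = (𝒜_{f^{-n}x}^{n})⁻¹` for `n ≥ 1`. -/
noncomputable def cocZ [TopologicalSpace M] (f : M ≃ₜ M) (A : M → (X ≃L[ℝ] X)) :
    ℤ → M → (X ≃L[ℝ] X)
  | (n : ℕ), x => coc f A n x
  | (Int.negSucc n), x => (coc f A (n + 1) (f.symm^[n + 1] x))⁻¹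

section Auxiliary

variable {M : Type*} {X : Type*} [NormedAddCommGroup X] [NormedSpace ℝ X]

lemma gl_dist_def (A B : X ≃L[ℝ] X) :
    dist A B = ‖(A : X →L[ℝ] X) - (B : X →L[ℝ] X)‖ +
      ‖(A.symm : X →L[ℝ] X) - (B.symm : X →L[ℝ] X)‖ := rfl

lemma gl_coe_mul (A B : X ≃L[ℝ] X) :
    ((A * B : X ≃L[ℝ] X) : X →L[ℝ] X) = (A : X →L[ℝ] X).comp (B : X →L[ℝ] X) := rfl

lemma gl_symm_mul (A B : X ≃L[ℝ] X) :
    (((A * B : X ≃L[ℝ] X)).symm : X →L[ℝ] X) =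
      (B.symm : X →L[ℝ] X).comp (A.symm : X →L[ℝ] X) := rfl

lemma gl_continuous_mul_right (B : X ≃L[ℝ] X) :
    Continuous (fun T : X ≃L[ℝ] X => T * B) := by
  rw [Metric.continuous_iff]
  intro a ε hε
  set c : ℝ := ‖(B : X →L[ℝ] X)‖ + ‖(B.symm : X →L[ℝ] X)‖ + 1 with hc
  have hc0 : 0 < c := by positivity
  refine ⟨ε / c, by positivity, fun x hx => ?_⟩
  have key : dist (x * B) (a * B) ≤ c * dist x a := by
    rw [gl_dist_def, gl_dist_def, gl_coe_mul, gl_coe_mul, gl_symm_mul, gl_symm_mul,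
      ← ContinuousLinearMap.sub_comp, ← ContinuousLinearMap.comp_sub]
    have h1 := ContinuousLinearMap.opNorm_comp_le
      ((x : X →L[ℝ] X) - (a : X →L[ℝ] X)) (B : X →L[ℝ] X)
    have h2 := ContinuousLinearMap.opNorm_comp_le (B.symm : X →L[ℝ] X)
      ((x.symm : X →L[ℝ] X) - (a.symm : X →L[ℝ] X))
    have n1 : (0:ℝ) ≤ ‖(x : X →L[ℝ] X) - (a : X →L[ℝ] X)‖ := norm_nonneg _
    have n2 : (0:ℝ) ≤ ‖(x.symm : X →L[ℝ] X) - (a.symm : X →L[ℝ] X)‖ := norm_nonneg _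
    have n3 : (0:ℝ) ≤ ‖(B : X →L[ℝ] X)‖ := norm_nonneg _
    have n4 : (0:ℝ) ≤ ‖(B.symm : X →L[ℝ] X)‖ := norm_nonneg _
    nlinarith
  calc dist (x * B) (a * B) ≤ c * dist x a := key
    _ < c * (ε / c) := by exact (mul_lt_mul_iff_right₀ hc0).2 hx
    _ = ε := by field_simp

lemma coc_eq (f : M → M) (A C : M → (X ≃L[ℝ] X)) :
    ∀ (n : ℕ) (x : M), (∀ k < n, A (f^[k] x) = C (f (f^[k] x)) * (C (f^[k] x))⁻¹) →
      coc f A n x = C (f^[n] x) * (C x)⁻¹ := by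
  intro n
  induction n with
  | zero =>
      intro x _
      simp only [coc, Function.iterate_zero, id_eq]
      group
  | succ n ih =>
      intro x h
      have hA : A x = C (f x) * (C x)⁻¹ := by simpa using h 0 (Nat.succ_pos n)
      have hx : coc f A n (f x) = C (f^[n] (f x)) * (C (f x))⁻¹ :=
        ih (f x) (fun k hk => by
          have := h (k+1) (Nat.succ_lt_succ hk)
          rwa [Function.iterate_succ_apply] at this)
      show coc f A n (f x) * A x = _
      rw [hx, hA, ← Function.iterate_succ_apply]
      group

end Auxiliary


/-- Let `f` be a homeomorphism of a compact metric space `M` preserving an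
ergodic Borel probability measure `ν`, `A : M → GL(X)` continuous, and let `K` be the closure
of `⋃_{n∈ℤ} {𝒜ₓⁿ : x ∈ M}` in `(GL(X), d)`. If `C : M → GL(X)` is `ν`-continuous and
`A(x) = C(fx) ∘ C(x)⁻¹` for `ν`-a.e. `x`, then there exists `B ∈ GL(X)` with
`C(y) ∘ B ∈ K` for `ν`-a.e. `y`. -/
theorem stmt2 {M : Type*} [MetricSpace M] [CompactSpace M] [MeasurableSpace M] [BorelSpace M]
    {X : Type*} [NormedAddCommGroup X] [NormedSpace ℝ X] [CompleteSpace X]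
    (f : M ≃ₜ M) (ν : Measure M) [IsProbabilityMeasure ν] (herg : Ergodic f ν)
    (A : M → (X ≃L[ℝ] X)) (hA : Continuous A)
    (K : Set (X ≃L[ℝ] X)) (hK : K = closure (⋃ n : ℤ, Set.range (cocZ f A n)))
    (C : M → (X ≃L[ℝ] X)) (hC : MuContinuous ν C)
    (hcob : ∀ᵐ x ∂ν, A x = C (f x) * (C x)⁻¹) :
    ∃ B : X ≃L[ℝ] X, ∀ᵐ y ∂ν, C y * B ∈ K := by

  classical
  obtain ⟨L, hLcomp, hLmeas, hLcont⟩ := hC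
  set E : Set M := {x | A x = C (f x) * (C x)⁻¹} with hE
  -- measure preservation
  have hmpf : MeasureTheory.MeasurePreserving f ν ν := herg.toMeasurePreserving
  have hmps : MeasureTheory.MeasurePreserving f.symm ν ν := by
    have h1 : MeasureTheory.MeasurePreserving (f.toMeasurableEquiv) ν ν := hmpf
    exact h1.symm f.toMeasurableEquiv
  have hEnull : ν Eᶜ = 0 := by
    have h : ∀ᵐ x ∂ν, x ∈ E := hcob
    rw [MeasureTheory.ae_iff] at h
    exact MeasureTheory.measure_mono_null (fun x hx => hx) h
  have hiterE : ∀ k : ℕ, ∀ᵐ x ∂ν, f^[k] x ∈ E ∧ (⇑f.symm)^[k] x ∈ E := by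
    intro k
    have h1 : ν (f^[k] ⁻¹' Eᶜ) = 0 :=
      (hmpf.iterate k).quasiMeasurePreserving.preimage_null hEnull
    have h2 : ν ((⇑f.symm)^[k] ⁻¹' Eᶜ) = 0 :=
      (hmps.iterate k).quasiMeasurePreserving.preimage_null hEnull
    have e1 : ∀ᵐ x ∂ν, f^[k] x ∈ E := by
      rw [ae_iff]; exact MeasureTheory.measure_mono_null (fun x hx => hx) h1
    have e2 : ∀ᵐ x ∂ν, (⇑f.symm)^[k] x ∈ E := by
      rw [ae_iff]; exact MeasureTheory.measure_mono_null (fun x hx => hx) h2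
    exact e1.and e2
  have hG : ∀ᵐ x ∂ν, ∀ k : ℕ, f^[k] x ∈ E ∧ (⇑f.symm)^[k] x ∈ E :=
    MeasureTheory.ae_all_iff.mpr hiterE
  -- countable basis
  set 𝔅 : Set (Set M) := TopologicalSpace.countableBasis M with h𝔅def
  have h𝔅 : (𝔅 : Set (Set M)).Countable := TopologicalSpace.countable_countableBasis M
  set preK : Set (X ≃L[ℝ] X) := ⋃ n : ℤ, Set.range (cocZ f A n) with hpreK
  -- recurrence
  have hrec : ∀ᵐ x ∂ν, ∀ m : ℕ, ∀ U ∈ 𝔅, ν (U ∩ L m) ≠ 0 →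
      ∃ n : ℕ, f^[n] x ∈ U ∩ L m ∨ (⇑f.symm)^[n] x ∈ U ∩ L m := by
    rw [MeasureTheory.ae_all_iff]
    intro m
    rw [ae_ball_iff h𝔅]
    intro U hU
    by_cases hν : ν (U ∩ L m) = 0
    · exact Filter.Eventually.of_forall fun x h1 => absurd hν h1
    set E' : Set M := U ∩ L m with hE'
    have hE'meas : MeasurableSet E' :=
      ((TopologicalSpace.isOpen_of_mem_countableBasis hU).measurableSet).inter
        (hLcomp m).isClosed.measurableSet
    set W : Set M := ⋃ n : ℕ, (f^[n] ⁻¹' E' ∪ (⇑f.symm)^[n] ⁻¹' E') with hW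
    have hWmeas : MeasurableSet W := MeasurableSet.iUnion fun n =>
      ((f.continuous.measurable.iterate n) hE'meas).union
        ((f.symm.continuous.measurable.iterate n) hE'meas)
    have hWinv : ⇑f ⁻¹' W = W := by
      ext x
      simp only [hW, Set.mem_preimage, Set.mem_iUnion, Set.mem_union]
      constructor
      · rintro ⟨n, h | h⟩
        · exact ⟨n+1, Or.inl (by rwa [Function.iterate_succ_apply])⟩
        · cases n with
          | zero => exact ⟨1, Or.inl (by simpa using h)⟩
          | succ k =>
              refine ⟨k, Or.inr ?_⟩
              have hk : (⇑f.symm)^[k+1] (f x) = (⇑f.symm)^[k] x := by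
                rw [Function.iterate_succ_apply]
                simp
              rwa [hk] at h
      · rintro ⟨n, h | h⟩
        · cases n with
          | zero => exact ⟨1, Or.inr (by simpa using h)⟩
          | succ k => exact ⟨k, Or.inl (by rwa [Function.iterate_succ_apply] at h)⟩
        · refine ⟨n+1, Or.inr ?_⟩
          have hk : (⇑f.symm)^[n+1] (f x) = (⇑f.symm)^[n] x := by
            rw [Function.iterate_succ_apply]
            simp
          rwa [hk]
    rcases herg.ae_empty_or_univ hWmeas hWinv with h | h
    · exfalso
      apply hν
      have hsub : E' ⊆ W := fun x hx => Set.mem_iUnion.2 ⟨0, Or.inl hx⟩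
      have hW0 : ν W = 0 := by
        have := MeasureTheory.measure_congr h
        simpa using this
      exact MeasureTheory.measure_mono_null hsub hW0
    · have hae : ∀ᵐ x ∂ν, x ∈ W := by
        have h' := ae_eq_univ.mp h
        rw [ae_iff]
        exact MeasureTheory.measure_mono_null (fun x hx => hx) h'
      filter_upwards [hae] with x hx _
      obtain ⟨n, hn⟩ := Set.mem_iUnion.mp hx
      rcases hn with h1 | h1
      · exact ⟨n, Or.inl h1⟩
      · exact ⟨n, Or.inr h1⟩
  -- choose x₀
  haveI : (MeasureTheory.ae ν).NeBot :=
    MeasureTheory.ae_neBot.mpr (MeasureTheory.IsProbabilityMeasure.ne_zero ν)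
  obtain ⟨x₀, hx₀G, hx₀rec⟩ := (hG.and hrec).exists
  -- key iterate identity
  have hkey : ∀ k n : ℕ, k ≤ n → f^[k] ((⇑f.symm)^[n] x₀) = (⇑f.symm)^[n-k] x₀ := by
    intro k n hkn
    have h1 : (⇑f.symm)^[n] x₀ = (⇑f.symm)^[k] ((⇑f.symm)^[n-k] x₀) := by
      rw [← Function.iterate_add_apply]
      congr 1
      omega
    rw [h1]
    exact (Function.LeftInverse.iterate f.apply_symm_apply k) _
  -- cocycle values lie in preK
  have horb_pos : ∀ n : ℕ, C (f^[n] x₀) * (C x₀)⁻¹ ∈ preK := by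
    intro n
    have hcv : coc (⇑f) A n x₀ = C (f^[n] x₀) * (C x₀)⁻¹ :=
      coc_eq (⇑f) A C n x₀ (fun k _ => (hx₀G k).1)
    exact Set.mem_iUnion.2 ⟨(n : ℤ), ⟨x₀, hcv⟩⟩
  have horb_neg : ∀ n : ℕ, C ((⇑f.symm)^[n] x₀) * (C x₀)⁻¹ ∈ preK := by
    intro n
    cases n with
    | zero =>
        simp only [Function.iterate_zero, id_eq]
        refine Set.mem_iUnion.2 ⟨(0 : ℤ), ⟨x₀, ?_⟩⟩
        show (1 : X ≃L[ℝ] X) = _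
        group
    | succ n =>
        have hhyp : ∀ k < n+1, A (f^[k] ((⇑f.symm)^[n+1] x₀)) =
            C (f (f^[k] ((⇑f.symm)^[n+1] x₀))) * (C (f^[k] ((⇑f.symm)^[n+1] x₀)))⁻¹ := by
          intro k hk
          have h2 : f^[k] ((⇑f.symm)^[n+1] x₀) = (⇑f.symm)^[n+1-k] x₀ :=
            hkey k (n+1) (by omega)
          rw [h2]
          exact (hx₀G (n+1-k)).2
        have hcoc : coc (⇑f) A (n+1) ((⇑f.symm)^[n+1] x₀) =
            C x₀ * (C ((⇑f.symm)^[n+1] x₀))⁻¹ := by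
          rw [coc_eq (⇑f) A C (n+1) ((⇑f.symm)^[n+1] x₀) hhyp,
            hkey (n+1) (n+1) le_rfl]
          simp
        refine Set.mem_iUnion.2 ⟨Int.negSucc n, ⟨x₀, ?_⟩⟩
        show (coc (⇑f) A (n+1) ((⇑f.symm)^[n+1] x₀))⁻¹ = _
        rw [hcoc]
        group
  set Orb : Set M := {z | ∃ n : ℕ, f^[n] x₀ = z ∨ (⇑f.symm)^[n] x₀ = z} with hOrb
  have horb : ∀ z ∈ Orb, C z * (C x₀)⁻¹ ∈ preK := by
    rintro z ⟨n, h | h⟩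
    · rw [← h]; exact horb_pos n
    · rw [← h]; exact horb_neg n
  -- bad sets
  set bad : ℕ → Set M := fun m => ⋃ U ∈ {U ∈ 𝔅 | ν (U ∩ L m) = 0}, (U ∩ L m) with hbad
  have hbadnull : ∀ m, ν (bad m) = 0 := by
    intro m
    rw [hbad]
    refine (measure_biUnion_null_iff (h𝔅.mono (Set.sep_subset _ _))).2 ?_
    intro U hU
    exact hU.2
  have hfull1 : ∀ᵐ y ∂ν, y ∈ ⋃ m, L m := by
    have hmeas : MeasurableSet (⋃ m, L m) :=
      MeasurableSet.iUnion fun m => (hLcomp m).isClosed.measurableSet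
    rw [ae_iff]
    have h0 : ν (⋃ m, L m)ᶜ = 0 := by
      rw [MeasureTheory.measure_compl hmeas (MeasureTheory.measure_ne_top ν _), hLmeas]
      simp
    exact MeasureTheory.measure_mono_null (fun x hx => hx) h0
  have hfull2 : ∀ᵐ y ∂ν, ∀ m, y ∉ bad m := by
    rw [MeasureTheory.ae_all_iff]
    intro m
    rw [ae_iff]
    refine MeasureTheory.measure_mono_null (fun x hx => ?_) (hbadnull m)
    simpa using hx
  refine ⟨(C x₀)⁻¹, ?_⟩
  filter_upwards [hfull1, hfull2] with y hy1 hy2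
  obtain ⟨m, hym⟩ := Set.mem_iUnion.1 hy1
  have hyc : y ∈ closure (Orb ∩ L m) := by
    rw [mem_closure_iff]
    intro O hO hyO
    obtain ⟨U, hU𝔅, hyU, hUO⟩ :=
      (TopologicalSpace.isBasis_countableBasis M).exists_subset_of_mem_open hyO hO
    have hν : ν (U ∩ L m) ≠ 0 := by
      intro h0
      exact hy2 m (Set.mem_biUnion ⟨hU𝔅, h0⟩ ⟨hyU, hym⟩)
    obtain ⟨n, hn⟩ := hx₀rec m U hU𝔅 hν
    rcases hn with h | h
    · exact ⟨f^[n] x₀, hUO h.1, ⟨⟨n, Or.inl rfl⟩, h.2⟩⟩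
    · exact ⟨(⇑f.symm)^[n] x₀, hUO h.1, ⟨⟨n, Or.inr rfl⟩, h.2⟩⟩
  have hCy : C y ∈ closure (C '' (Orb ∩ L m)) :=
    (((hLcont m) y hym).mono Set.inter_subset_right).mem_closure_image hyc
  have himg : (fun T : X ≃L[ℝ] X => T * (C x₀)⁻¹) '' (C '' (Orb ∩ L m)) ⊆ preK := by
    rintro w ⟨v, ⟨z, hz, rfl⟩, rfl⟩
    exact horb z hz.1
  have hmem : C y * (C x₀)⁻¹ ∈ closure preK := by
    have h1 : C y * (C x₀)⁻¹ ∈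
        (fun T : X ≃L[ℝ] X => T * (C x₀)⁻¹) '' closure (C '' (Orb ∩ L m)) :=
      Set.mem_image_of_mem _ hCy
    have h2 := image_closure_subset_closure_image (gl_continuous_mul_right ((C x₀)⁻¹)) h1
    exact closure_mono himg h2
  rw [hK]
  exact hmem
end

section
/- Let (Ω, μ̂) and (S, m) be standard Borel probability spaces and Y a separable complete metric space. Let Φ: Ω → (S → Y) be a map such that Φ(ω): S → Y is Borel for every ω ∈ Ω, and such that for every Borel map h: S → Y and every δ > 0 the set {ω ∈ Ω : d_F(Φ(ω), h) < δ} is Borel in Ω. Then there exists a Borel map Φ̂: Ω × S → Y such that for μ̂-a.e. ω ∈ Ω one has Φ̂(ω, s) = Φ(ω)(s) for m-a.e. s ∈ S. -/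
open MeasureTheory Filter Topology Set
open scoped ENNReal

/-- The Ky Fan distance between measurable maps into a metric space:
`d_F(φ,ψ) = inf {ε > 0 : m{s : dist(φ(s), ψ(s)) > ε} ≤ ε}`. -/
noncomputable def kyFan {S Y : Type*} [MeasurableSpace S] [PseudoMetricSpace Y]
    (m : Measure S) (φ ψ : S → Y) : ℝ :=
  sInf {ε : ℝ | 0 < ε ∧ m {s | ε < dist (φ s) (ψ s)} ≤ ENNReal.ofReal ε}

section KF
variable {S Y : Type*} [MeasurableSpace S] [PseudoMetricSpace Y]

lemma kyFan_lt_of {m : Measure S} {φ ψ : S → Y} {δ ε : ℝ}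
    (hε : 0 < ε) (hεδ : ε < δ) (h : m {s | ε < dist (φ s) (ψ s)} ≤ ENNReal.ofReal ε) :
    kyFan m φ ψ < δ :=
  lt_of_le_of_lt (csInf_le ⟨0, fun _ hx => hx.1.le⟩ ⟨hε, h⟩) hεδ

lemma of_kyFan_lt {m : Measure S} [IsProbabilityMeasure m] {φ ψ : S → Y} {δ : ℝ}
    (h : kyFan m φ ψ < δ) : m {s | δ < dist (φ s) (ψ s)} ≤ ENNReal.ofReal δ := by
  have hne : {ε : ℝ | 0 < ε ∧ m {s | ε < dist (φ s) (ψ s)} ≤ ENNReal.ofReal ε}.Nonempty := by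
    refine ⟨1, one_pos, ?_⟩
    calc m {s | (1:ℝ) < dist (φ s) (ψ s)} ≤ m univ := measure_mono (subset_univ _)
    _ = 1 := measure_univ
    _ ≤ ENNReal.ofReal 1 := by simp
  have hbdd : BddBelow {ε : ℝ | 0 < ε ∧ m {s | ε < dist (φ s) (ψ s)} ≤ ENNReal.ofReal ε} :=
    ⟨0, fun _ hx => hx.1.le⟩
  obtain ⟨ε, ⟨hεpos, hεm⟩, hεδ⟩ := (csInf_lt_iff hbdd hne).mp h
  calc m {s | δ < dist (φ s) (ψ s)} ≤ m {s | ε < dist (φ s) (ψ s)} := by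
        refine measure_mono fun s hs => ?_
        exact lt_trans hεδ hs
  _ ≤ ENNReal.ofReal ε := hεm
  _ ≤ ENNReal.ofReal δ := ENNReal.ofReal_le_ofReal hεδ.le

end KF


open Classical in
/-- First-hit piecewise function determined by a list of (value index, set index family). -/
noncomputable def pickFun {S Y : Type*} (D : ℕ → Y) (e : ℕ → Set S) (y0 : Y) :
    List (ℕ × Finset ℕ) → S → Y
  | [] => fun _ => y0
  | p :: rest => fun s =>
      if s ∈ ⋃ i ∈ p.2, e i then D p.1 else pickFun D e y0 rest s

lemma pickFun_measurable {S Y : Type*} [MeasurableSpace S] [MeasurableSpace Y]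
    {D : ℕ → Y} {e : ℕ → Set S} {y0 : Y} (he : ∀ i, MeasurableSet (e i)) :
    ∀ l : List (ℕ × Finset ℕ), Measurable (pickFun D e y0 l)
  | [] => measurable_const
  | p :: rest => by
      have hW : MeasurableSet (⋃ i ∈ p.2, e i) := p.2.measurableSet_biUnion fun i _ => he i
      have ih := pickFun_measurable (D := D) (y0 := y0) he rest
      exact Measurable.ite hW measurable_const ih

lemma pickFun_eq {S Y : Type*} {D : ℕ → Y} {e : ℕ → Set S} {y0 : Y}
    {l : List (ℕ × Finset ℕ)} {s : S} {j : ℕ} {t : Finset ℕ}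
    (h1 : (j, t) ∈ l) (h2 : s ∈ ⋃ i ∈ t, e i)
    (h3 : ∀ p ∈ l, s ∈ (⋃ i ∈ p.2, e i) → p.1 = j) :
    pickFun D e y0 l s = D j := by
  induction l with
  | nil => exact absurd h1 List.not_mem_nil
  | cons p rest ih =>
      by_cases hp : s ∈ ⋃ i ∈ p.2, e i
      · have := h3 p List.mem_cons_self hp
        simp [pickFun, hp, this]
      · have h1' : (j, t) ∈ rest := by
          rcases List.mem_cons.mp h1 with h | h
          · exact absurd (by rw [← h] at hp; exact hp) (not_not_intro h2)
          · exact h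
        simp only [pickFun, if_neg hp]
        exact ih h1' fun q hq => h3 q (List.mem_cons_of_mem _ hq)

lemma approx_by_basis {S : Type*} [MeasurableSpace S] [TopologicalSpace S]
    (m : Measure S) [IsFiniteMeasure m] [m.OuterRegular]
    (e : ℕ → Set S) (he : ∀ i, MeasurableSet (e i))
    (hbasis : ∀ U : Set S, IsOpen U → ∀ x ∈ U, ∃ i, x ∈ e i ∧ e i ⊆ U)
    {A : Set S} (hA : MeasurableSet A) {η : ℝ≥0∞} (hη : η ≠ 0) :
    ∃ t : Finset ℕ, m (A \ (⋃ i ∈ t, e i)) + m ((⋃ i ∈ t, e i) \ A) < η := by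
  classical
  rcases eq_or_ne η ∞ with rfl | hηtop
  · exact ⟨∅, by simp [lt_top_iff_ne_top, ENNReal.add_ne_top, measure_ne_top]⟩
  have hη2 : η / 2 ≠ 0 := by
    simpa using (ENNReal.half_pos hη).ne'
  obtain ⟨U, hAU, hUopen, -, hUdiff⟩ := hA.exists_isOpen_diff_lt (measure_ne_top m A) hη2
  set e' : ℕ → Set S := fun i => if e i ⊆ U then e i else ∅ with he'
  have hUe' : ⋃ i, e' i = U := by
    apply subset_antisymm
    · refine iUnion_subset fun i => ?_
      by_cases h : e i ⊆ U <;> simp [e', h]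
    · intro x hx
      obtain ⟨i, hxi, hiU⟩ := hbasis U hUopen x hx
      exact mem_iUnion.mpr ⟨i, by simp [e', hiU, hxi]⟩
  have htend : Tendsto (fun n => m (accumulate e' n)) atTop (𝓝 (m U)) := by
    simpa [hUe'] using tendsto_measure_iUnion_accumulate (μ := m) (f := e')
  have hlt : m U < m U + η / 2 :=
    ENNReal.lt_add_right (measure_ne_top m U) hη2
  have : ∀ᶠ n in atTop, m U < m (accumulate e' n) + η / 2 := by
    have : Tendsto (fun n => m (accumulate e' n) + η / 2) atTop (𝓝 (m U + η / 2)) :=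
      htend.add tendsto_const_nhds
    exact this.eventually_const_lt hlt
  obtain ⟨n, hn⟩ := this.exists
  refine ⟨(Finset.range (n + 1)).filter fun i => e i ⊆ U, ?_⟩
  set W : Set S := ⋃ i ∈ (Finset.range (n + 1)).filter fun i => e i ⊆ U, e i with hW
  have hWacc : W = accumulate e' n := by
    ext x
    simp only [hW, mem_iUnion, Finset.mem_filter, Finset.mem_range, Nat.lt_succ_iff,
      mem_accumulate, e']
    constructor
    · rintro ⟨i, ⟨hin, hiU⟩, hxi⟩
      exact ⟨i, hin, by simp [hiU, hxi]⟩
    · rintro ⟨i, hin, hxi⟩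
      by_cases h : e i ⊆ U
      · exact ⟨i, ⟨hin, h⟩, by simpa [h] using hxi⟩
      · simp [h] at hxi
  have hWU : W ⊆ U := by
    rw [hWacc, ← hUe']
    exact accumulate_subset_iUnion _
  have hWmeas : MeasurableSet W :=
    Finset.measurableSet_biUnion _ fun i _ => he i
  have hUW : m (U \ W) < η / 2 := by
    apply measure_diff_lt_of_lt_add hWmeas.nullMeasurableSet hWU (measure_ne_top m W)
    rw [hWacc]; exact hn
  have h1 : m (A \ W) ≤ m (U \ W) := measure_mono (diff_subset_diff_left hAU)
  have h2 : m (W \ A) ≤ m (U \ A) := measure_mono (diff_subset_diff_left hWU)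
  calc m (A \ W) + m (W \ A) ≤ m (U \ W) + m (U \ A) := add_le_add h1 h2
  _ < η / 2 + η / 2 := ENNReal.add_lt_add hUW hUdiff
  _ = η := ENNReal.add_halves η

lemma exists_denseSeq {S Y : Type*} [MeasurableSpace S] [StandardBorelSpace S]
    [MetricSpace Y] [TopologicalSpace.SeparableSpace Y] [MeasurableSpace Y] [BorelSpace Y]
    (m : Measure S) [IsProbabilityMeasure m] (y0 : Y) :
    ∃ H : ℕ → S → Y, (∀ k, Measurable (H k)) ∧
      ∀ φ : S → Y, Measurable φ → ∀ δ : ℝ, 0 < δ →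
        ∃ k, 0 < δ/2 ∧ δ/2 < δ ∧
          m {s | δ/2 < dist (φ s) (H k s)} ≤ ENNReal.ofReal (δ/2) := by
  classical
  haveI : Nonempty Y := ⟨y0⟩
  letI := upgradeStandardBorel S
  have hcb : (insert (∅ : Set S) (TopologicalSpace.countableBasis S)).Countable :=
    (TopologicalSpace.countable_countableBasis S).insert ∅
  haveI : Countable (insert (∅ : Set S) (TopologicalSpace.countableBasis S) : Set (Set S)) :=
    hcb.to_subtype
  obtain ⟨e0, he0⟩ :=
    exists_surjective_nat (insert (∅ : Set S) (TopologicalSpace.countableBasis S) : Set (Set S))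
  set e : ℕ → Set S := fun i => (e0 i : Set S) with he
  have heopen : ∀ i, IsOpen (e i) := by
    intro i
    rcases (e0 i).2 with h | h
    · simp only [he, h]; exact isOpen_empty
    · exact TopologicalSpace.isOpen_of_mem_countableBasis h
  have hemeas : ∀ i, MeasurableSet (e i) := fun i => (heopen i).measurableSet
  have hbasis : ∀ U : Set S, IsOpen U → ∀ x ∈ U, ∃ i, x ∈ e i ∧ e i ⊆ U := by
    intro U hU x hx
    obtain ⟨b, hb, hxb, hbU⟩ :=
      (TopologicalSpace.isBasis_countableBasis S).exists_subset_of_mem_open hx hU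
    obtain ⟨i, hi⟩ := he0 ⟨b, mem_insert_of_mem _ hb⟩
    refine ⟨i, ?_, ?_⟩
    · simp only [he, hi]; exact hxb
    · simp only [he, hi]; exact hbU
  set D : ℕ → Y := TopologicalSpace.denseSeq Y with hD
  have hDdense : DenseRange D := TopologicalSpace.denseRange_denseSeq Y
  obtain ⟨u, hu⟩ := exists_surjective_nat (List (ℕ × Finset ℕ))
  refine ⟨fun k => pickFun D e y0 (u k), fun k => pickFun_measurable hemeas _, ?_⟩
  intro φ hφ δ hδ
  set r := δ / 4 with hr
  have hrpos : 0 < r := by positivity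
  set A' : ℕ → Set S := fun j => φ ⁻¹' Metric.ball (D j) r with hA'
  have hA'meas : ∀ j, MeasurableSet (A' j) := fun j => hφ measurableSet_ball
  have hcover : ⋃ j, A' j = univ := by
    ext s
    simp only [mem_iUnion, mem_univ, iff_true, hA', mem_preimage, Metric.mem_ball]
    exact Metric.denseRange_iff.mp hDdense (φ s) r hrpos
  set A : ℕ → Set S := disjointed A' with hA
  have hAmeas : ∀ j, MeasurableSet (A j) := MeasurableSet.disjointed hA'meas
  have hAdisj : Pairwise (Function.onFun Disjoint A) := disjoint_disjointed A'
  have hAsub : ∀ j, A j ⊆ A' j := fun j => disjointed_subset A' j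
  have hAU : ⋃ j, A j = univ := by rw [hA, iUnion_disjointed, hcover]
  have hAccmeas : ∀ n, MeasurableSet (accumulate A n) := by
    intro n
    rw [Set.accumulate_def]
    exact MeasurableSet.biUnion (to_countable _) fun j _ => hAmeas j
  have hη8pos : (0 : ℝ≥0∞) < ENNReal.ofReal (δ / 8) := ENNReal.ofReal_pos.mpr (by positivity)
  have htend : Tendsto (fun n => m (accumulate A n)) atTop (𝓝 (1 : ℝ≥0∞)) := by
    have := tendsto_measure_iUnion_accumulate (μ := m) (f := A)
    rwa [hAU, measure_univ] at this
  have hev : ∀ᶠ n in atTop, (1 : ℝ≥0∞) < m (accumulate A n) + ENNReal.ofReal (δ / 8) := by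
    have h2 : Tendsto (fun n => m (accumulate A n) + ENNReal.ofReal (δ / 8)) atTop
        (𝓝 ((1 : ℝ≥0∞) + ENNReal.ofReal (δ / 8))) := htend.add tendsto_const_nhds
    exact h2.eventually_const_lt (ENNReal.lt_add_right ENNReal.one_ne_top hη8pos.ne')
  obtain ⟨N, hN⟩ := hev.exists
  have hBad0 : m (univ \ accumulate A N) < ENNReal.ofReal (δ / 8) := by
    apply measure_diff_lt_of_lt_add (hAccmeas N).nullMeasurableSet (subset_univ _)
      (measure_ne_top _ _)
    rwa [measure_univ]
  have hηdiv : (ENNReal.ofReal (δ / 8)) / ((N : ℝ≥0∞) + 1) ≠ 0 := by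
    refine (ENNReal.div_pos hη8pos.ne' ?_).ne'
    exact (ENNReal.add_lt_top.mpr ⟨ENNReal.natCast_lt_top N, ENNReal.one_lt_top⟩).ne
  choose t ht using fun j : ℕ =>
    approx_by_basis m e hemeas hbasis (hAmeas j) hηdiv
  set l := (List.range (N + 1)).map (fun j => (j, t j)) with hl
  obtain ⟨k, hk⟩ := hu l
  refine ⟨k, by positivity, by linarith, ?_⟩
  simp only [hk]
  set hfun := pickFun D e y0 l with hhfun
  set W : ℕ → Set S := fun j => ⋃ i ∈ t j, e i with hW
  set Bad : Set S := (univ \ accumulate A N) ∪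
    ⋃ j ∈ Finset.range (N + 1), ((A j \ W j) ∪ (W j \ A j)) with hBad
  have hmBad : m Bad ≤ ENNReal.ofReal (δ / 4) := by
    have hsum : ∀ j ∈ Finset.range (N + 1),
        m ((A j \ W j) ∪ (W j \ A j)) ≤ (ENNReal.ofReal (δ / 8)) / ((N : ℝ≥0∞) + 1) := by
      intro j _
      exact le_trans (measure_union_le _ _) (ht j).le
    calc m Bad ≤ m (univ \ accumulate A N) +
        m (⋃ j ∈ Finset.range (N + 1), ((A j \ W j) ∪ (W j \ A j))) := measure_union_le _ _
    _ ≤ ENNReal.ofReal (δ / 8) +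
        ∑ j ∈ Finset.range (N + 1), m ((A j \ W j) ∪ (W j \ A j)) :=
          add_le_add hBad0.le (measure_biUnion_finset_le _ _)
    _ ≤ ENNReal.ofReal (δ / 8) +
        ∑ _j ∈ Finset.range (N + 1), (ENNReal.ofReal (δ / 8)) / ((N : ℝ≥0∞) + 1) :=
          add_le_add_right (Finset.sum_le_sum hsum) _
    _ = ENNReal.ofReal (δ / 8) + ENNReal.ofReal (δ / 8) := by
        rw [Finset.sum_const, Finset.card_range, nsmul_eq_mul]
        congr 1
        push_cast
        exact ENNReal.mul_div_cancel' (by simp) (by simp)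
    _ = ENNReal.ofReal (δ / 4) := by
        rw [← ENNReal.ofReal_add (by positivity) (by positivity)]
        congr 1
        ring
  have hgood : ∀ s, s ∉ Bad → dist (φ s) (hfun s) < δ / 2 := by
    intro s hs
    simp only [hBad, mem_union, not_or, mem_diff, mem_univ, true_and, not_not,
      mem_iUnion, not_exists] at hs
    obtain ⟨hsAcc, hsj⟩ := hs
    obtain ⟨j, hjN, hsAj⟩ := mem_accumulate.mp hsAcc
    have hjr : j ∈ Finset.range (N + 1) := Finset.mem_range.mpr (Nat.lt_succ_of_le hjN)
    have hsWj : s ∈ W j := by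
      by_contra hsW
      exact (hsj j hjr).1 ⟨hsAj, hsW⟩
    have hjl : (j, t j) ∈ l := List.mem_map.mpr ⟨j, List.mem_range.mpr
      (Nat.lt_succ_of_le hjN), rfl⟩
    have h3 : ∀ p ∈ l, s ∈ (⋃ i ∈ p.2, e i) → p.1 = j := by
      rintro p hp hsp
      obtain ⟨j', hj', rfl⟩ := List.mem_map.mp hp
      have hj'r : j' ∈ Finset.range (N + 1) := Finset.mem_range.mpr (List.mem_range.mp hj')
      have hsAj' : s ∈ A j' := by
        by_contra hsA'
        exact (hsj j' hj'r).2 ⟨hsp, hsA'⟩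
      by_contra hne
      exact (hAdisj hne).ne_of_mem hsAj' hsAj rfl
    have heq : pickFun D e y0 l s = D j := pickFun_eq hjl hsWj h3
    rw [hhfun, heq]
    have : s ∈ A' j := hAsub j hsAj
    have hd : dist (φ s) (D j) < r := by
      simpa [hA', Metric.mem_ball] using this
    calc dist (φ s) (D j) < r := hd
    _ < δ / 2 := by rw [hr]; linarith
  calc m {s | δ / 2 < dist (φ s) (hfun s)} ≤ m Bad := by
        refine measure_mono fun s hs => ?_
        by_contra hsB
        exact absurd (hgood s hsB) (not_lt.mpr (le_of_lt hs))
  _ ≤ ENNReal.ofReal (δ / 4) := hmBad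
  _ ≤ ENNReal.ofReal (δ / 2) := ENNReal.ofReal_le_ofReal (by linarith)

/-- A Borel family `Φ : Ω → F(S,Y)` of Borel maps (Borel in the sense that
preimages of Ky Fan balls around Borel maps are Borel) admits a jointly Borel representative
`Φ̂ : Ω × S → Y` with `Φ̂(ω,·) = Φ(ω)` m-a.e., for μ̂-a.e. ω. -/
theorem stmt5 {Ω S : Type*} [MeasurableSpace Ω] [StandardBorelSpace Ω]
    [MeasurableSpace S] [StandardBorelSpace S]
    (μh : Measure Ω) [IsProbabilityMeasure μh] (m : Measure S) [IsProbabilityMeasure m]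
    {Y : Type*} [MetricSpace Y] [TopologicalSpace.SeparableSpace Y] [CompleteSpace Y]
    [MeasurableSpace Y] [BorelSpace Y]
    (Φ : Ω → S → Y) (hΦ : ∀ ω, Measurable (Φ ω))
    (hmeas : ∀ h : S → Y, Measurable h → ∀ δ : ℝ, 0 < δ →
      MeasurableSet {ω : Ω | kyFan m (Φ ω) h < δ}) :
    ∃ Φhat : Ω × S → Y, Measurable Φhat ∧
      ∀ᵐ ω ∂μh, ∀ᵐ s ∂m, Φhat (ω, s) = Φ ω s := by
  classical
  have hΩne : Nonempty Ω := by
    by_contra hne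
    rw [not_nonempty_iff] at hne
    have h1 : μh Set.univ = 1 := measure_univ
    rw [Set.univ_eq_empty_iff.mpr hne, measure_empty] at h1
    exact zero_ne_one h1
  have hSne : Nonempty S := by
    by_contra hne
    rw [not_nonempty_iff] at hne
    have h1 : m Set.univ = 1 := measure_univ
    rw [Set.univ_eq_empty_iff.mpr hne, measure_empty] at h1
    exact zero_ne_one h1
  obtain ⟨ω0⟩ := hΩne
  obtain ⟨s0⟩ := hSne
  set y0 : Y := Φ ω0 s0 with hy0
  obtain ⟨H, hHmeas, hHdense⟩ := exists_denseSeq m y0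
  have hdense : ∀ ω (n : ℕ), ∃ k, kyFan m (Φ ω) (H k) < (1/2 : ℝ)^n := by
    intro ω n
    have hp : (0:ℝ) < (1/2)^n := by positivity
    obtain ⟨k, h1, h2, h3⟩ := hHdense (Φ ω) (hΦ ω) _ hp
    exact ⟨k, kyFan_lt_of h1 h2 h3⟩
  set κ : ℕ → Ω → ℕ := fun n ω => Nat.find (hdense ω n) with hκ
  have hκmeas : ∀ n, Measurable (κ n) := fun n =>
    measurable_find (fun ω => hdense ω n)
      (fun k => hmeas (H k) (hHmeas k) _ (by positivity))
  set g : S × ℕ → Y := fun q => H q.2 q.1 with hg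
  have hgmeas : Measurable g := measurable_from_prod_countable_left fun k => hHmeas k
  set Ψ : ℕ → Ω × S → Y := fun n p => H (κ n p.1) p.2 with hΨ
  have hΨmeas : ∀ n, Measurable (Ψ n) := by
    intro n
    have heq : Ψ n = g ∘ fun p : Ω × S => (p.2, κ n p.1) := rfl
    rw [heq]
    exact hgmeas.comp (measurable_snd.prodMk ((hκmeas n).comp measurable_fst))
  set L : Set (Ω × S) := {p | ∃ c, Tendsto (fun n => Ψ n p) atTop (𝓝 c)} with hL
  have hLmeas : MeasurableSet L := measurableSet_exists_tendsto hΨmeas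
  set Ψ' : ℕ → Ω × S → Y := fun n p => if p ∈ L then Ψ n p else y0 with hΨ'
  have hΨ'meas : ∀ n, Measurable (Ψ' n) := fun n =>
    Measurable.ite hLmeas (hΨmeas n) measurable_const
  have hΨ'eq : ∀ p ∈ L, (fun n => Ψ' n p) = fun n => Ψ n p := fun p hp =>
    funext fun n => if_pos hp
  have hΨ'conv : ∀ p, ∃ c, Tendsto (fun n => Ψ' n p) atTop (𝓝 c) := by
    intro p
    by_cases hp : p ∈ L
    · obtain ⟨c, hc⟩ := id hp
      refine ⟨c, ?_⟩
      rw [hΨ'eq p hp]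
      exact hc
    · refine ⟨y0, ?_⟩
      have : (fun n => Ψ' n p) = fun _ => y0 := funext fun n => if_neg hp
      rw [this]
      exact tendsto_const_nhds
  haveI : Nonempty Y := ⟨y0⟩
  set Φhat : Ω × S → Y := fun p => limUnder atTop (fun n => Ψ' n p) with hΦhat
  have hΦhattendsto : ∀ p, Tendsto (fun n => Ψ' n p) atTop (𝓝 (Φhat p)) := by
    intro p
    simp only [hΦhat]
    exact tendsto_nhds_limUnder (hΨ'conv p)
  have hΦhatmeas : Measurable Φhat :=
    measurable_of_tendsto_metrizable' atTop hΨ'meas (tendsto_pi_nhds.mpr hΦhattendsto)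
  refine ⟨Φhat, hΦhatmeas, ae_of_all _ fun ω => ?_⟩
  set E : ℕ → Set S := fun n => {s | (1/2:ℝ)^n < dist (Φ ω s) (H (κ n ω) s)} with hE
  have hEbound : ∀ n, m (E n) ≤ ENNReal.ofReal ((1/2)^n) := fun n =>
    of_kyFan_lt (Nat.find_spec (hdense ω n))
  have hsum : (∑' n, m (E n)) ≠ ∞ := by
    have h1 : (∑' n, m (E n)) ≤ ∑' n : ℕ, ENNReal.ofReal ((1/2)^n) :=
      ENNReal.tsum_le_tsum hEbound
    have h2 : (∑' n : ℕ, ENNReal.ofReal ((1/2)^n)) =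
        ∑' n : ℕ, (ENNReal.ofReal (1/2))^n := by
      congr 1
      ext n
      rw [ENNReal.ofReal_pow (by norm_num)]
    have h3 : (∑' n : ℕ, (ENNReal.ofReal (1/2))^n) ≠ ∞ := by
      rw [ENNReal.tsum_geometric, Ne, ENNReal.inv_eq_top, tsub_eq_zero_iff_le, not_le]
      exact ENNReal.ofReal_lt_one.mpr (by norm_num)
    exact ne_top_of_le_ne_top (h2 ▸ h3) h1
  have hBC : m (limsup E atTop) = 0 := measure_limsup_atTop_eq_zero hsum
  filter_upwards [measure_eq_zero_iff_ae_notMem.mp hBC] with s hs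
  rw [mem_limsup_iff_frequently_mem, Filter.not_frequently] at hs
  have htends : Tendsto (fun n => Ψ n (ω, s)) atTop (𝓝 (Φ ω s)) := by
    rw [tendsto_iff_dist_tendsto_zero]
    have h0 : Tendsto (fun n : ℕ => (1/2:ℝ)^n) atTop (𝓝 0) :=
      tendsto_pow_atTop_nhds_zero_of_lt_one (by norm_num) (by norm_num)
    refine squeeze_zero' (Eventually.of_forall fun n => dist_nonneg)
      (hs.mono fun n hn => ?_) h0
    have : ¬ ((1/2:ℝ)^n < dist (Φ ω s) (H (κ n ω) s)) := hn
    rw [dist_comm]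
    exact not_lt.mp this
  have hpL : (ω, s) ∈ L := ⟨Φ ω s, htends⟩
  have hΨ's : Tendsto (fun n => Ψ' n (ω, s)) atTop (𝓝 (Φ ω s)) := by
    rw [hΨ'eq _ hpL]
    exact htends
  exact tendsto_nhds_unique (hΦhattendsto (ω, s)) hΨ's
end

section
/- Let S be a Polish (complete separable metric) space, m a Borel probability measure on S, and Y a separable metric space. Let g_n, g: S → S be Borel maps that preserve m, and let φ_n, φ: S → Y be Borel maps. If g_n → g in measure and φ_n → φ in measure, then φ_n ∘ g_n → φ ∘ g in measure. -/
open MeasureTheory Filter Topology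
open scoped ENNReal

/-- Convergence in measure of measurable maps into a metric space. -/
def TendstoInMeas {S Y : Type*} [MeasurableSpace S] [Dist Y]
    (m : Measure S) (φ : ℕ → S → Y) (ψ : S → Y) : Prop :=
  ∀ ε : ℝ, 0 < ε → Tendsto (fun n => m {s | ε < dist (φ n s) (ψ s)}) atTop (𝓝 0)

open Metric Set in
/-- Ulam tightness: a finite Borel measure on a Polish space is tight. -/
lemma tight_aux {S : Type*} [MetricSpace S] [CompleteSpace S]
    [TopologicalSpace.SeparableSpace S] [MeasurableSpace S] [OpensMeasurableSpace S]
    (m : Measure S) [IsFiniteMeasure m] {δ : ℝ≥0∞} (hδ : δ ≠ 0) :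
    ∃ K : Set S, IsCompact K ∧ m Kᶜ ≤ δ := by
  rcases isEmpty_or_nonempty S with hS | hS
  · refine ⟨∅, isCompact_empty, ?_⟩
    have h1 : (∅ : Set S)ᶜ = (∅ : Set S) := by
      rw [Set.compl_empty]; exact Set.univ_eq_empty_iff.mpr hS
    simp [h1]
  · set x := TopologicalSpace.denseSeq S with hxdef
    have hx : DenseRange x := TopologicalSpace.denseRange_denseSeq S
    have key : ∀ k : ℕ, ∃ N : ℕ,
        m (⋃ i ∈ Finset.range N, closedBall (x i) (1/(k+1)))ᶜ ≤ δ/2 * (1/2)^k := by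
      intro k
      set W : ℕ → Set S := fun N => (⋃ i ∈ Finset.range N, closedBall (x i) (1/(k+1)))ᶜ
        with hW
      have hmono : Antitone W := by
        intro a b hab
        apply Set.compl_subset_compl.2
        refine Set.iUnion₂_subset fun i hi => ?_
        intro z hz
        exact Set.mem_biUnion (Finset.mem_range.2
          (lt_of_lt_of_le (Finset.mem_range.1 hi) hab)) hz
      have hint : ⋂ N, W N = ∅ := by
        rw [Set.eq_empty_iff_forall_notMem]
        intro s hs
        obtain ⟨i, hi⟩ := hx.exists_dist_lt s (show (0:ℝ) < 1/(k+1) by positivity)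
        have h2 := Set.mem_iInter.1 hs (i+1)
        exact h2 (Set.mem_biUnion (Finset.self_mem_range_succ i) (mem_closedBall.2 hi.le))
      have hmeas : ∀ N, NullMeasurableSet (W N) m := fun N =>
        (((Finset.range N).measurableSet_biUnion
          (fun i _ => measurableSet_closedBall)).compl).nullMeasurableSet
      have htend := tendsto_measure_iInter_atTop hmeas hmono ⟨0, measure_ne_top m _⟩
      rw [hint, measure_empty] at htend
      have hpos : (0:ℝ≥0∞) < δ/2 * (1/2)^k := by
        apply ENNReal.mul_pos
        · simp [ENNReal.div_eq_zero_iff, hδ]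
        · exact ENNReal.pow_ne_zero (by norm_num) k
      exact (ENNReal.tendsto_nhds_zero.mp htend (δ/2 * (1/2)^k) hpos).exists
    choose N hN using key
    refine ⟨⋂ k, ⋃ i ∈ Finset.range (N k), closedBall (x i) (1/(k+1)), ?_, ?_⟩
    · apply TotallyBounded.isCompact_of_isClosed
      · rw [Metric.totallyBounded_iff]
        intro r hr
        obtain ⟨k, hk⟩ := exists_nat_one_div_lt hr
        refine ⟨x '' {i | i < N k}, (Set.finite_lt_nat _).image x, fun s hs => ?_⟩
        have h3 := Set.mem_iInter.1 hs k
        obtain ⟨i, hi, hsi⟩ := Set.mem_iUnion₂.1 h3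
        refine Set.mem_biUnion ⟨i, Finset.mem_range.1 hi, rfl⟩ ?_
        exact Metric.closedBall_subset_ball hk hsi
      · exact isClosed_iInter fun k => (Finset.range (N k)).finite_toSet.isClosed_biUnion
          (fun i _ => Metric.isClosed_closedBall)
    · rw [Set.compl_iInter]
      refine le_trans (measure_iUnion_le _) ?_
      refine le_trans (ENNReal.tsum_le_tsum fun k => hN k) ?_
      rw [ENNReal.tsum_mul_left, ENNReal.tsum_geometric]
      rw [show ((1:ℝ≥0∞) - 1/2) = 2⁻¹ by rw [one_div]; exact ENNReal.one_sub_inv_two]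
      rw [inv_inv]
      exact le_of_eq (ENNReal.div_mul_cancel (by norm_num) (by norm_num))

/-- Finitely many pairwise disjoint compact sets are uniformly separated. -/
lemma sep_aux {S : Type*} [MetricSpace S] (K : ℕ → Set S) (hK : ∀ i, IsCompact (K i))
    (hd : ∀ i j, i ≠ j → Disjoint (K i) (K j)) (F : Finset ℕ) :
    ∃ η : ℝ, 0 < η ∧ ∀ i ∈ F, ∀ j ∈ F, i ≠ j → ∀ x ∈ K i, ∀ y ∈ K j, η ≤ dist x y := by
  classical
  induction F using Finset.induction with
  | empty => exact ⟨1, one_pos, by simp⟩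
  | @insert a F ha ih =>
    obtain ⟨η₁, hη₁, h1⟩ := ih
    set L : Set S := ⋃ j ∈ F, K j with hL
    have hLclosed : IsClosed L := F.finite_toSet.isClosed_biUnion fun j _ => (hK j).isClosed
    have hdisj : Disjoint (K a) L := by
      rw [hL, Set.disjoint_iUnion₂_right]
      intro j hj
      exact hd a j (fun h => ha (h ▸ hj))
    obtain ⟨δ, hδpos, hδ⟩ := (hK a).exists_thickening_subset_open hLclosed.isOpen_compl
      hdisj.subset_compl_right
    have hsep : ∀ x ∈ K a, ∀ y ∈ L, δ ≤ dist x y := by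
      intro x hx y hy
      by_contra hlt
      push_neg at hlt
      have : y ∈ Metric.thickening δ (K a) :=
        Metric.mem_thickening_iff.2 ⟨x, hx, by rwa [dist_comm]⟩
      exact hδ this hy
    refine ⟨min η₁ δ, lt_min hη₁ hδpos, ?_⟩
    intro i hi j hj hij x hx y hy
    rcases Finset.mem_insert.1 hi with rfl | hiF
    · rcases Finset.mem_insert.1 hj with rfl | hjF
      · exact absurd rfl hij
      · exact le_trans (min_le_right _ _) (hsep x hx y (Set.mem_biUnion hjF hy))
    · rcases Finset.mem_insert.1 hj with rfl | hjF
      · rw [dist_comm]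
        exact le_trans (min_le_right _ _) (hsep y hy x (Set.mem_biUnion hiF hx))
      · exact le_trans (min_le_left _ _) (h1 i hiF j hjF hij x hx y hy)

/-- Let `S` be Polish with Borel probability measure `m`, `Y` a separable
metric space, `gₙ, g : S → S` Borel and `m`-preserving, and `φₙ, φ : S → Y` Borel. If
`gₙ → g` in measure and `φₙ → φ` in measure, then `φₙ ∘ gₙ → φ ∘ g` in measure. -/
theorem stmt6 {S : Type*} [MetricSpace S] [CompleteSpace S] [TopologicalSpace.SeparableSpace S]
    [MeasurableSpace S] [BorelSpace S]
    (m : Measure S) [IsProbabilityMeasure m]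
    {Y : Type*} [MetricSpace Y] [TopologicalSpace.SeparableSpace Y]
    [MeasurableSpace Y] [BorelSpace Y]
    (g : ℕ → S → S) (g₀ : S → S)
    (hg : ∀ n, Measurable (g n)) (hg₀ : Measurable g₀)
    (hgpres : ∀ n, MeasurePreserving (g n) m m) (hg₀pres : MeasurePreserving g₀ m m)
    (φ : ℕ → S → Y) (φ₀ : S → Y)
    (hφ : ∀ n, Measurable (φ n)) (hφ₀ : Measurable φ₀)
    (hgconv : TendstoInMeas m g g₀) (hφconv : TendstoInMeas m φ φ₀) :
    TendstoInMeas m (fun n => φ n ∘ g n) (φ₀ ∘ g₀) := by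
  intro ε hε
  rw [ENNReal.tendsto_nhds_zero]
  simp only [Function.comp_apply]
  intro δ hδ
  have hSne : Nonempty S := by
    by_contra h
    rw [not_nonempty_iff] at h
    have h1 := measure_univ (μ := m)
    rw [Set.univ_eq_empty_iff.mpr h, measure_empty] at h1
    exact zero_ne_one h1
  haveI : Nonempty Y := ⟨φ₀ (Classical.arbitrary S)⟩
  haveI : SecondCountableTopology Y := UniformSpace.secondCountable_of_separable Y
  set y : ℕ → Y := TopologicalSpace.denseSeq Y with hy_def
  have hy : DenseRange y := TopologicalSpace.denseRange_denseSeq Y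
  set B : ℕ → Set S := fun i => φ₀ ⁻¹' Metric.ball (y i) (ε/4) with hB
  set A : ℕ → Set S := disjointed B with hA
  have hAmeas : ∀ i, MeasurableSet (A i) :=
    MeasurableSet.disjointed fun i => hφ₀ measurableSet_ball
  have hAsub : ∀ i, A i ⊆ B i := fun i => disjointed_subset B i
  have hAdis : Pairwise (Function.onFun Disjoint A) := disjoint_disjointed B
  have hAcover : ∀ s : S, ∃ i, s ∈ A i := by
    intro s
    have hmem : s ∈ ⋃ i, A i := by
      rw [hA, iUnion_disjointed]
      obtain ⟨i, hi⟩ := hy.exists_dist_lt (φ₀ s) (show (0:ℝ) < ε/4 by positivity)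
      exact Set.mem_iUnion.2 ⟨i, Metric.mem_ball.2 hi⟩
    exact Set.mem_iUnion.1 hmem
  set T : ℕ → Set S := fun N => ⋃ i, ⋃ (_ : N ≤ i), A i with hT
  have hTmeas : ∀ N, MeasurableSet (T N) := fun N =>
    MeasurableSet.iUnion fun i => MeasurableSet.iUnion fun _ => hAmeas i
  have hTmono : Antitone T := by
    intro a b hab
    refine Set.iUnion₂_subset fun i hi => ?_
    exact Set.subset_iUnion₂ (s := fun i (_ : a ≤ i) => A i) i (hab.trans hi)
  have hTempty : ⋂ N, T N = ∅ := by
    rw [Set.eq_empty_iff_forall_notMem]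
    intro s hs
    obtain ⟨i, _, hsi⟩ := Set.mem_iUnion₂.1 (Set.mem_iInter.1 hs 0)
    obtain ⟨j, hj, hsj⟩ := Set.mem_iUnion₂.1 (Set.mem_iInter.1 hs (i+1))
    exact Set.disjoint_left.1 (hAdis (Nat.lt_of_lt_of_le (Nat.lt_succ_self i) hj).ne) hsi hsj
  have hTtend : Tendsto (fun N => m (T N)) atTop (𝓝 0) := by
    have h2 := tendsto_measure_iInter_atTop (fun N => (hTmeas N).nullMeasurableSet) hTmono
      ⟨0, measure_ne_top m _⟩
    rwa [hTempty, measure_empty] at h2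
  have hδ8 : (0:ℝ≥0∞) < δ/8 := ENNReal.div_pos hδ.ne' (by norm_num)
  obtain ⟨N, hTN⟩ := (ENNReal.tendsto_nhds_zero.mp hTtend (δ/8) hδ8).exists
  obtain ⟨K, hKcomp, hKm⟩ := tight_aux m (show δ/8 ≠ 0 from hδ8.ne')
  have hδ'ne : (δ/8) / (N:ℝ≥0∞) ≠ 0 := by
    rw [Ne, ENNReal.div_eq_zero_iff, not_or]
    exact ⟨hδ8.ne', ENNReal.natCast_ne_top N⟩
  choose C hCsub hCclosed hCsmall using fun i : ℕ =>
    (hAmeas i).exists_isClosed_diff_lt (measure_ne_top m _) hδ'ne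
  set Kc : ℕ → Set S := fun i => C i ∩ K with hKc
  have hKccomp : ∀ i, IsCompact (Kc i) := fun i => hKcomp.inter_left (hCclosed i)
  have hKcdis : ∀ i j, i ≠ j → Disjoint (Kc i) (Kc j) := fun i j hij =>
    (hAdis hij).mono (Set.inter_subset_left.trans (hCsub i))
      (Set.inter_subset_left.trans (hCsub j))
  obtain ⟨η, hηpos, hηsep⟩ := sep_aux Kc hKccomp hKcdis (Finset.range N)
  set U : Set S := ⋃ i ∈ Finset.range N, Kc i with hU
  have hUmeas : MeasurableSet U :=
    (Finset.range N).measurableSet_biUnion fun i _ => ((hKccomp i).isClosed).measurableSet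
  have hUc : m Uᶜ ≤ δ/8 + (δ/8 + δ/8) := by
    have hincl : Uᶜ ⊆ T N ∪ ((⋃ i ∈ Finset.range N, (A i \ C i)) ∪ Kᶜ) := by
      intro s hsU
      obtain ⟨i, hi⟩ := hAcover s
      by_cases hNi : N ≤ i
      · exact Or.inl (Set.mem_iUnion₂.2 ⟨i, hNi, hi⟩)
      · by_cases hC : s ∈ C i
        · by_cases hk : s ∈ K
          · exact absurd (Set.mem_biUnion (Finset.mem_range.2 (lt_of_not_ge hNi))
              (show s ∈ Kc i by rw [hKc]; exact ⟨hC, hk⟩)) hsU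
          · exact Or.inr (Or.inr hk)
        · exact Or.inr (Or.inl (Set.mem_biUnion (Finset.mem_range.2 (lt_of_not_ge hNi)) ⟨hi, hC⟩))
    refine le_trans (measure_mono hincl) ?_
    refine le_trans (measure_union_le _ _) (add_le_add hTN ?_)
    refine le_trans (measure_union_le _ _) (add_le_add ?_ hKm)
    refine le_trans (measure_biUnion_finset_le _ _) ?_
    refine le_trans (Finset.sum_le_sum fun i _ => (hCsmall i).le) ?_
    rw [Finset.sum_const, Finset.card_range, nsmul_eq_mul]
    exact ENNReal.mul_div_le
  have hE1 := ENNReal.tendsto_nhds_zero.mp (hφconv (ε/2) (half_pos hε)) (δ/8) hδ8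
  have hE2 := ENNReal.tendsto_nhds_zero.mp (hgconv (η/2) (half_pos hηpos)) (δ/8) hδ8
  filter_upwards [hE1, hE2] with n h1 h2
  set D : Set S := {s | ε/2 < dist (φ n s) (φ₀ s)} with hD
  have hDmeas : MeasurableSet D := measurableSet_lt measurable_const ((hφ n).dist hφ₀)
  have hincl2 : {s | ε < dist (φ n (g n s)) (φ₀ (g₀ s))} ⊆
      g n ⁻¹' D ∪ (g n ⁻¹' Uᶜ ∪ (g₀ ⁻¹' Uᶜ ∪ {s | η/2 < dist (g n s) (g₀ s)})) := by
    intro s hs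
    by_contra hcon
    simp only [Set.mem_union, not_or, Set.mem_preimage, Set.mem_compl_iff, hD,
      Set.mem_setOf_eq, not_lt, not_not] at hcon
    obtain ⟨hc1, hc2, hc3, hc4⟩ := hcon
    obtain ⟨i, hiN, hgi⟩ := Set.mem_iUnion₂.1 hc2
    obtain ⟨j, hjN, hgj⟩ := Set.mem_iUnion₂.1 hc3
    have hij : i = j := by
      by_contra hne
      have hd := hηsep i hiN j hjN hne _ hgi _ hgj
      linarith
    subst hij
    rw [hKc] at hgi hgj
    have hb1 : φ₀ (g n s) ∈ Metric.ball (y i) (ε/4) := hAsub i (hCsub i hgi.1)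
    have hb2 : φ₀ (g₀ s) ∈ Metric.ball (y i) (ε/4) := hAsub i (hCsub i hgj.1)
    rw [Metric.mem_ball] at hb1 hb2
    rw [Set.mem_setOf_eq] at hs
    have ht1 := dist_triangle (φ n (g n s)) (φ₀ (g n s)) (φ₀ (g₀ s))
    have ht2 := dist_triangle (φ₀ (g n s)) (y i) (φ₀ (g₀ s))
    rw [dist_comm (y i) (φ₀ (g₀ s))] at ht2
    linarith
  calc m {s | ε < dist (φ n (g n s)) (φ₀ (g₀ s))}
      ≤ m (g n ⁻¹' D) + (m (g n ⁻¹' Uᶜ) + (m (g₀ ⁻¹' Uᶜ)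
          + m {s | η/2 < dist (g n s) (g₀ s)})) := by
        refine le_trans (measure_mono hincl2) ?_
        refine le_trans (measure_union_le _ _) (add_le_add le_rfl ?_)
        refine le_trans (measure_union_le _ _) (add_le_add le_rfl ?_)
        exact measure_union_le _ _
    _ = m D + (m Uᶜ + (m Uᶜ + m {s | η/2 < dist (g n s) (g₀ s)})) := by
        rw [(hgpres n).measure_preimage hDmeas.nullMeasurableSet,
          (hgpres n).measure_preimage hUmeas.compl.nullMeasurableSet,
          hg₀pres.measure_preimage hUmeas.compl.nullMeasurableSet]
    _ ≤ δ/8 + ((δ/8 + (δ/8 + δ/8)) + ((δ/8 + (δ/8 + δ/8)) + δ/8)) := by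
        exact add_le_add h1 (add_le_add hUc (add_le_add hUc h2))
    _ = 8 * (δ/8) := by ring
    _ ≤ δ := ENNReal.mul_div_le
end

section
/- Let M be a compact metric space, f: M → M a map, X a real Banach space, A: M → GL(X) a map with cocycle 𝒜, and let p ∈ M be a periodic point of f. Then for every ρ > 0 there exist a sequence ε_i → 0 of nonnegative reals and a set S_p ⊆ ℕ with upper density Dens̄(S_p) > 1 − ρ such that for every n ∈ S_p and every 0 ≤ i ≤ n: ‖𝒜_{f^i p}^{n−i}‖ ≤ ‖𝒜_p^n‖·e^{(−λ₊(p)+ε_i)·i} and ‖(𝒜_{f^i p}^{n−i})⁻¹‖ ≤ ‖(𝒜_p^n)⁻¹‖·e^{(λ₋(p)+ε_i)·i}. -/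
open MeasureTheory Filter Topology

variable {M : Type*} {X : Type*} [NormedAddCommGroup X] [NormedSpace ℝ X]

/-- The upper density of a set of naturals: `limsup_N |S ∩ [0, N−1]| / N`. -/
noncomputable def upperDens (S : Set ℕ) : ℝ :=
  Filter.limsup (fun N : ℕ => ((S ∩ Set.Iio N).ncard : ℝ) / (N : ℝ)) atTop

section Aux
open scoped Classical

variable {M : Type*} {X : Type*} [NormedAddCommGroup X] [NormedSpace ℝ X]

lemma coc_succ_r (f : M → M) (A : M → (X ≃L[ℝ] X)) (n : ℕ) (x : M) :
    coc f A (n+1) x = A (f^[n] x) * coc f A n x := by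
  induction n generalizing x with
  | zero => simp [coc]
  | succ n ih =>
    have h1 : coc f A (n+1+1) x = coc f A (n+1) (f x) * A x := rfl
    have h2 : coc f A (n+1) x = coc f A n (f x) * A x := rfl
    rw [h1, ih (f x), ← Function.iterate_succ_apply f n x, h2, mul_assoc]

lemma coc_add (f : M → M) (A : M → (X ≃L[ℝ] X)) (a b : ℕ) (x : M) :
    coc f A (a + b) x = coc f A b (f^[a] x) * coc f A a x := by
  induction b with
  | zero => simp [coc]
  | succ b ih =>
    rw [← Nat.add_assoc, coc_succ_r, ih, coc_succ_r, ← Function.iterate_add_apply,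
      Nat.add_comm a b, mul_assoc]

lemma iter_mul_J (f : M → M) (p : M) (J : ℕ) (hp : f^[J] p = p) : ∀ q : ℕ, f^[q * J] p = p := by
  intro q
  induction q with
  | zero => simp
  | succ q ih => rw [Nat.succ_mul, Function.iterate_add_apply, hp, ih]

lemma iter_mod (f : M → M) (p : M) (J : ℕ) (hp : f^[J] p = p) (t : ℕ) :
    f^[t] p = f^[t % J] p := by
  conv_lhs => rw [show t = t % J + (t / J) * J by rw [Nat.mod_add_div']]
  rw [Function.iterate_add_apply, iter_mul_J f p J hp]

lemma gl_norm_pos [Nontrivial X] (E : X ≃L[ℝ] X) : 0 < ‖(E : X →L[ℝ] X)‖ := by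
  rw [norm_pos_iff]; intro h
  obtain ⟨x, hx⟩ := exists_ne (0 : X)
  have hEx : E x = 0 := by rw [← ContinuousLinearEquiv.coe_coe, h]; rfl
  exact hx ((E.map_eq_zero_iff).mp hEx)

lemma gl_log_mul_le [Nontrivial X] (E F : X ≃L[ℝ] X) :
    Real.log ‖((E * F : X ≃L[ℝ] X) : X →L[ℝ] X)‖ ≤
      Real.log ‖(E : X →L[ℝ] X)‖ + Real.log ‖(F : X →L[ℝ] X)‖ := by
  rw [← Real.log_mul (ne_of_gt (gl_norm_pos E)) (ne_of_gt (gl_norm_pos F))]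
  refine Real.log_le_log (gl_norm_pos _) ?_
  have : ((E * F : X ≃L[ℝ] X) : X →L[ℝ] X) = (E : X →L[ℝ] X).comp (F : X →L[ℝ] X) := by ext x; rfl
  rw [this]; exact ContinuousLinearMap.opNorm_comp_le _ _

lemma gl_log_one [Nontrivial X] : Real.log ‖((1 : X ≃L[ℝ] X) : X →L[ℝ] X)‖ = 0 := by
  have : ((1 : X ≃L[ℝ] X) : X →L[ℝ] X) = ContinuousLinearMap.id ℝ X := by ext x; rfl
  rw [this, ContinuousLinearMap.norm_id, Real.log_one]

/-- `log‖𝒜ₚⁿ‖`. -/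
noncomputable def lA (f : M → M) (A : M → (X ≃L[ℝ] X)) (p : M) (n : ℕ) : ℝ :=
  Real.log ‖(coc f A n p : X →L[ℝ] X)‖

/-- `log‖(𝒜ₚⁿ)⁻¹‖`. -/
noncomputable def lB (f : M → M) (A : M → (X ≃L[ℝ] X)) (p : M) (n : ℕ) : ℝ :=
  Real.log ‖(((coc f A n p)⁻¹ : X ≃L[ℝ] X) : X →L[ℝ] X)‖

lemma aux_coc_bound [Nontrivial X] (f : M → M) (A : M → (X ≃L[ℝ] X)) (p : M) (Λ : ℝ)
    (hΛ : ∀ t : ℕ, Real.log ‖(A (f^[t] p) : X →L[ℝ] X)‖ ≤ Λ ∧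
      Real.log ‖(((A (f^[t] p))⁻¹ : X ≃L[ℝ] X) : X →L[ℝ] X)‖ ≤ Λ) :
    ∀ s t : ℕ, Real.log ‖(coc f A s (f^[t] p) : X →L[ℝ] X)‖ ≤ s * Λ ∧
      Real.log ‖(((coc f A s (f^[t] p))⁻¹ : X ≃L[ℝ] X) : X →L[ℝ] X)‖ ≤ s * Λ := by
  intro s
  induction s with
  | zero =>
    intro t
    constructor
    · simpa [coc] using le_of_eq (gl_log_one (X := X))
    · simpa [coc] using le_of_eq (gl_log_one (X := X))
  | succ s ih =>
    intro t
    have hc : coc f A (s+1) (f^[t] p) = coc f A s (f^[t+1] p) * A (f^[t] p) := by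
      show coc f A s (f (f^[t] p)) * A (f^[t] p) = _
      rw [← Function.iterate_succ_apply' f t p]
    constructor
    · rw [hc]
      calc Real.log ‖((coc f A s (f^[t+1] p) * A (f^[t] p) : X ≃L[ℝ] X) : X →L[ℝ] X)‖
          ≤ Real.log ‖(coc f A s (f^[t+1] p) : X →L[ℝ] X)‖ + Real.log ‖(A (f^[t] p) : X →L[ℝ] X)‖ :=
            gl_log_mul_le _ _
        _ ≤ s * Λ + Λ := add_le_add (ih (t+1)).1 (hΛ t).1
        _ = (s + 1 : ℕ) * Λ := by push_cast; ring
    · rw [hc, mul_inv_rev]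
      calc Real.log ‖(((A (f^[t] p))⁻¹ * (coc f A s (f^[t+1] p))⁻¹ : X ≃L[ℝ] X) : X →L[ℝ] X)‖
          ≤ _ + _ := gl_log_mul_le _ _
        _ ≤ Λ + s * Λ := add_le_add (hΛ t).2 (ih (t+1)).2
        _ = (s + 1 : ℕ) * Λ := by push_cast; ring

lemma core_ind (w : ℕ → ℝ) (C φ β δ : ℝ) (T : ℕ)
    (hsub : ∀ x y : ℕ, w (x + y) ≤ w x + w y + C)
    (hφ : ∀ g : ℕ, w g ≤ φ + β * g)
    (hT : 1 ≤ T) :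
    ∀ N : ℕ, ∃ L k e : ℕ,
      (((Finset.range N).filter
          (fun n => ∃ m, m + T ≤ n ∧ δ * ((n:ℝ) - m) < w m - w n)).card ≤ L)
      ∧ T * k ≤ L ∧ L ≤ e ∧ (e < N ∨ e = 0)
      ∧ δ * L + w e ≤ w 0 + k * (φ + C) + β * ((e:ℝ) - L) := by
  intro N
  induction N using Nat.strong_induction_on with
  | _ N IH =>
  by_cases hB : (((Finset.range N).filter
      (fun n => ∃ m, m + T ≤ n ∧ δ * ((n:ℝ) - m) < w m - w n))).Nonempty
  · set B := ((Finset.range N).filter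
      (fun n => ∃ m, m + T ≤ n ∧ δ * ((n:ℝ) - m) < w m - w n)) with hBdef
    set ns := B.max' hB with hns
    have hnsB : ns ∈ B := B.max'_mem hB
    have hnsN : ns < N := by
      have := (Finset.mem_filter.mp hnsB).1
      exact Finset.mem_range.mp this
    obtain ⟨m, hmT, hmw⟩ := (Finset.mem_filter.mp hnsB).2
    have hmns : m + 1 ≤ ns := le_trans (by omega) hmT
    have hm1N : m + 1 < N := by omega
    obtain ⟨L', k', e', hcard', hTk', hLe', he'N, hmain'⟩ := IH (m+1) hm1N
    have he'm : e' ≤ m := by omega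
    have hTk2 : T * (k' + 1) ≤ L' + (ns - m) := by
      have : T * (k' + 1) = T * k' + T := by ring
      omega
    refine ⟨L' + (ns - m), k' + 1, ns, ?_, hTk2, by omega, Or.inl hnsN, ?_⟩
    · have hsub2 : B ⊆ ((Finset.range (m+1)).filter
          (fun n => ∃ m', m' + T ≤ n ∧ δ * ((n:ℝ) - m') < w m' - w n)) ∪ Finset.Ioc m ns := by
        intro x hx
        have hxns : x ≤ ns := Finset.le_max' B x hx
        rcases le_or_gt x m with h | h
        · exact Finset.mem_union_left _ (Finset.mem_filter.mpr
            ⟨Finset.mem_range.mpr (by omega), (Finset.mem_filter.mp hx).2⟩)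
        · exact Finset.mem_union_right _ (Finset.mem_Ioc.mpr ⟨h, hxns⟩)
      calc B.card ≤ _ := Finset.card_le_card hsub2
        _ ≤ _ + (Finset.Ioc m ns).card := Finset.card_union_le _ _
        _ ≤ L' + (ns - m) := by rw [Nat.card_Ioc]; omega
    · have hwm : w m ≤ w e' + w (m - e') + C := by
        have := hsub e' (m - e')
        rwa [Nat.add_sub_cancel' he'm] at this
      have hwg : w (m - e') ≤ φ + β * ((m:ℝ) - e') := by
        have := hφ (m - e')
        rwa [Nat.cast_sub he'm] at this
      have hmle : m ≤ ns := by omega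
      have hc1 : ((L' + (ns - m) : ℕ) : ℝ) = (L' : ℝ) + ((ns:ℝ) - m) := by
        push_cast [Nat.cast_sub hmle]; ring
      have hc2 : (((k' + 1 : ℕ)) : ℝ) = (k' : ℝ) + 1 := by push_cast; ring
      rw [hc1, hc2]
      have hring : β * ((e':ℝ) - L') + β * ((m:ℝ) - e') = β * ((m:ℝ) - L') := by ring
      have hring2 : β * ((ns:ℝ) - ((L':ℝ) + ((ns:ℝ) - (m:ℝ)))) = β * ((m:ℝ) - L') := by ring
      have hring3 : δ * ((L':ℝ) + ((ns:ℝ) - m)) = δ * (L':ℝ) + δ * ((ns:ℝ) - m) := by ring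
      have hring4 : ((k':ℝ) + 1) * (φ + C) = (k':ℝ) * (φ + C) + (φ + C) := by ring
      rw [hring2, hring3, hring4]
      linarith [hmain', hwm, hwg, hmw, hring]
  · refine ⟨0, 0, 0, ?_, by omega, le_refl 0, Or.inr rfl, ?_⟩
    · rw [Finset.not_nonempty_iff_eq_empty.mp hB]; simp
    · push_cast
      nlinarith []

lemma core_count (w : ℕ → ℝ) (C φ β δ : ℝ) (T : ℕ)
    (hw0 : ∀ n, 0 ≤ w n)
    (hsub : ∀ x y : ℕ, w (x + y) ≤ w x + w y + C)
    (hφ : ∀ g : ℕ, w g ≤ φ + β * g)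
    (hδ : 0 < δ) (hT : 1 ≤ T) (hβ : 0 ≤ β) (hPC : 0 ≤ φ + C) :
    ∀ N : ℕ, δ * (((Finset.range N).filter
        (fun n => ∃ m, m + T ≤ n ∧ δ * ((n:ℝ) - m) < w m - w n)).card : ℝ)
      ≤ w 0 + ((φ + C)/T + β) * N := by
  intro N
  obtain ⟨L, k, e, hcard, hTk, hLe, heN, hmain⟩ :=
    core_ind w C φ β δ T hsub hφ hT N
  have heN' : e ≤ N := by omega
  have hTpos : (0:ℝ) < T := by exact_mod_cast hT
  have hkN : (k:ℝ) * (φ + C) ≤ ((φ + C)/T) * N := by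
    have h1 : (T:ℝ) * k ≤ N := by exact_mod_cast le_trans hTk (le_trans hLe heN')
    have h2 : (k:ℝ) ≤ (N:ℝ)/T := by
      rw [le_div_iff₀ hTpos]; linarith [h1]
    calc (k:ℝ) * (φ + C) ≤ ((N:ℝ)/T) * (φ + C) := mul_le_mul_of_nonneg_right h2 hPC
      _ = ((φ + C)/T) * N := by ring
  have hβe : β * ((e:ℝ) - L) ≤ β * N := by
    apply mul_le_mul_of_nonneg_left _ hβ
    have h1 : (e:ℝ) ≤ N := by exact_mod_cast heN'
    have h2 : (0:ℝ) ≤ L := Nat.cast_nonneg L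
    linarith
  have hcard' : δ * ((((Finset.range N).filter
      (fun n => ∃ m, m + T ≤ n ∧ δ * ((n:ℝ) - m) < w m - w n)).card : ℝ)) ≤ δ * L :=
    mul_le_mul_of_nonneg_left (by exact_mod_cast hcard) (le_of_lt hδ)
  calc δ * _ ≤ δ * (L:ℝ) := hcard'
    _ ≤ w 0 + k * (φ + C) + β * ((e:ℝ) - L) - w e := by linarith [hmain]
    _ ≤ w 0 + ((φ + C)/T) * N + β * N := by linarith [hw0 e, hkN, hβe]
    _ = w 0 + ((φ + C)/T + β) * N := by ring

lemma core_wrap (w : ℕ → ℝ) (C : ℝ) (hw0 : ∀ n, 0 ≤ w n) (hC : 0 ≤ C)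
    (hsub : ∀ x y : ℕ, w (x + y) ≤ w x + w y + C)
    (hlim : Tendsto (fun n : ℕ => w n / n) atTop (𝓝 0))
    (δ α : ℝ) (hδ : 0 < δ) (hα : 0 < α) :
    ∃ T : ℕ, 1 ≤ T ∧ ∀ N : ℕ,
      ((((Finset.range N).filter
        (fun n => ∃ m, m + T ≤ n ∧ δ * ((n:ℝ) - m) < w m - w n)).card : ℝ)) ≤ α * N := by
  have hβ : 0 < α * δ / 3 := by positivity
  have hev : ∀ᶠ g : ℕ in atTop, w g / g ≤ α * δ / 3 := by
    have := hlim.eventually (eventually_le_nhds hβ)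
    simpa using this
  obtain ⟨G₀, hG₀⟩ := eventually_atTop.mp (hev.and (eventually_ge_atTop 1))
  have hwlin : ∀ g : ℕ, G₀ ≤ g → w g ≤ (α * δ / 3) * g := by
    intro g hg
    obtain ⟨h1, h2⟩ := hG₀ g hg
    have hgpos : (0:ℝ) < g := by exact_mod_cast h2
    rw [div_le_iff₀ hgpos] at h1
    linarith
  set φ : ℝ := ∑ t ∈ Finset.range (G₀ + 1), w t with hφdef
  have hφ0 : 0 ≤ φ := Finset.sum_nonneg (fun t _ => hw0 t)
  have hφ : ∀ g : ℕ, w g ≤ φ + (α * δ / 3) * g := by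
    intro g
    rcases le_or_gt g G₀ with h | h
    · have h1 : w g ≤ φ := Finset.single_le_sum (fun t _ => hw0 t)
        (Finset.mem_range.mpr (by omega))
      have h2 : (0:ℝ) ≤ (α * δ / 3) * g := by positivity
      linarith
    · have := hwlin g (le_of_lt h)
      linarith
  set T : ℕ := max 1 ⌈(w 0 + φ + C) / (α * δ / 3)⌉₊ with hTdef
  have hT1 : 1 ≤ T := le_max_left _ _
  have hTpos : (0:ℝ) < T := by exact_mod_cast hT1
  have hTbig : w 0 + φ + C ≤ (T:ℝ) * (α * δ / 3) := by
    have h1 : (w 0 + φ + C) / (α * δ / 3) ≤ (⌈(w 0 + φ + C) / (α * δ / 3)⌉₊ : ℝ) :=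
      Nat.le_ceil _
    have h2 : ((⌈(w 0 + φ + C) / (α * δ / 3)⌉₊ : ℕ) : ℝ) ≤ (T:ℝ) := by
      exact_mod_cast le_max_right 1 _
    rw [div_le_iff₀ hβ] at h1
    have h3 := mul_le_mul_of_nonneg_right h2 (le_of_lt hβ)
    linarith
  refine ⟨T, hT1, ?_⟩
  intro N
  rcases le_or_gt N T with hNT | hNT
  · have hempty : ((Finset.range N).filter
        (fun n => ∃ m, m + T ≤ n ∧ δ * ((n:ℝ) - m) < w m - w n)) = ∅ := by
      apply Finset.filter_false_of_mem
      intro n hn ⟨m, hm, _⟩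
      have := Finset.mem_range.mp hn
      omega
    rw [hempty]
    simp only [Finset.card_empty, Nat.cast_zero]
    positivity
  · have hcc := core_count w C φ (α * δ / 3) δ T hw0 hsub hφ hδ hT1 (le_of_lt hβ)
      (by linarith [hC, hφ0]) N
    have hNT' : (T:ℝ) ≤ N := by exact_mod_cast le_of_lt hNT
    have hw00 : w 0 ≤ ((w 0 + φ + C)/T) * N - ((φ + C)/T) * N := by
      have : ((w 0 + φ + C)/T) * N - ((φ + C)/T) * N = w 0 * (N/T) := by ring
      rw [this]
      have h1 : (1:ℝ) ≤ N/T := by rw [le_div_iff₀ hTpos]; linarith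
      nlinarith [hw0 0]
    have hratio : ((w 0 + φ + C)/T) ≤ α * δ / 3 := by
      rw [div_le_iff₀ hTpos]; linarith
    have hfin : δ * ((((Finset.range N).filter
        (fun n => ∃ m, m + T ≤ n ∧ δ * ((n:ℝ) - m) < w m - w n)).card : ℝ)) ≤ δ * (α * N) := by
      have hN0 : (0:ℝ) ≤ N := Nat.cast_nonneg N
      calc δ * _ ≤ w 0 + ((φ + C)/T + α * δ / 3) * N := hcc
        _ = w 0 + ((φ + C)/T) * N + (α * δ / 3) * N := by ring
        _ ≤ ((w 0 + φ + C)/T) * N + (α * δ / 3) * N := by linarith [hw00]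
        _ ≤ (α * δ / 3) * N + (α * δ / 3) * N := by nlinarith [hratio, hN0]
        _ ≤ δ * (α * N) := by nlinarith [hα, hδ, hN0]
    exact le_of_mul_le_mul_left hfin hδ

lemma fekete_lb (g : ℕ → ℝ) (lam : ℝ) (J : ℕ) (hJ : 0 < J) (hg0 : g 0 = 0)
    (hsubJ : ∀ x y : ℕ, J ∣ x → g (x + y) ≤ g y + g x)
    (hlim : Tendsto (fun n : ℕ => (n:ℝ)⁻¹ * g n) atTop (𝓝 lam)) :
    ∀ k : ℕ, ((k * J : ℕ) : ℝ) * lam ≤ g (k * J) := by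
  intro k
  rcases Nat.eq_zero_or_pos k with hk | hk
  · subst hk; simp [hg0]
  have hkJ : 0 < k * J := Nat.mul_pos hk hJ
  have hpow : ∀ mm : ℕ, g (mm * (k * J)) ≤ mm * g (k * J) := by
    intro mm
    induction mm with
    | zero => simp [hg0]
    | succ mm ih =>
      have h1 : (mm + 1) * (k * J) = mm * (k * J) + k * J := by ring
      have h2 := hsubJ (mm * (k * J)) (k * J) ⟨mm * k, by ring⟩
      rw [h1]
      calc g (mm * (k * J) + k * J) ≤ g (k * J) + g (mm * (k * J)) := h2
        _ ≤ g (k * J) + mm * g (k * J) := by linarith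
        _ = ((mm + 1 : ℕ) : ℝ) * g (k * J) := by push_cast; ring
  have h1 : Tendsto (fun mm : ℕ => mm * (k * J)) atTop atTop :=
    tendsto_atTop_mono (fun mm => Nat.le_mul_of_pos_right mm hkJ) tendsto_id
  have h2 : Tendsto (fun mm : ℕ => ((mm * (k * J) : ℕ) : ℝ)⁻¹ * g (mm * (k * J)))
      atTop (𝓝 lam) := hlim.comp h1
  have h3 : lam ≤ ((k * J : ℕ) : ℝ)⁻¹ * g (k * J) := by
    apply le_of_tendsto h2
    filter_upwards [eventually_ge_atTop 1] with mm hmm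
    have hmm0 : (0:ℝ) < (mm : ℝ) := by exact_mod_cast hmm
    have hc0 : (0:ℝ) < ((k * J : ℕ) : ℝ) := by exact_mod_cast hkJ
    have hcast : ((mm * (k * J) : ℕ) : ℝ) = (mm : ℝ) * ((k * J : ℕ) : ℝ) := by push_cast; ring
    rw [hcast]
    have h4 : ((mm : ℝ) * ((k * J : ℕ) : ℝ))⁻¹ * g (mm * (k * J))
        ≤ ((mm : ℝ) * ((k * J : ℕ) : ℝ))⁻¹ * ((mm : ℝ) * g (k * J)) := by
      apply mul_le_mul_of_nonneg_left (hpow mm)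
      positivity
    have h5 : ((mm : ℝ) * ((k * J : ℕ) : ℝ))⁻¹ * ((mm : ℝ) * g (k * J))
        = ((k * J : ℕ) : ℝ)⁻¹ * g (k * J) := by
      field_simp
    rw [← h5]; exact h4
  have hc0 : (0:ℝ) < ((k * J : ℕ) : ℝ) := by exact_mod_cast hkJ
  calc ((k * J : ℕ) : ℝ) * lam ≤ ((k * J : ℕ) : ℝ) * (((k * J : ℕ) : ℝ)⁻¹ * g (k * J)) :=
        mul_le_mul_of_nonneg_left h3 (le_of_lt hc0)
    _ = g (k * J) := by field_simp

end Aux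

section Pack
variable {M : Type*} {X : Type*} [NormedAddCommGroup X] [NormedSpace ℝ X]
open Filter Topology

lemma analytic_pack [Nontrivial X] (f : M → M) (A : M → (X ≃L[ℝ] X)) (p : M) (J : ℕ)
    (hJ : 0 < J) (hp : f^[J] p = p) (lamP lamM : ℝ)
    (hlamP : Tendsto (fun n : ℕ => (n : ℝ)⁻¹ * lA f A p n) atTop (𝓝 lamP))
    (hlamM : Tendsto (fun n : ℕ => (n : ℝ)⁻¹ * lB f A p n) atTop (𝓝 (-lamM))) :
    ∃ Λ : ℝ, 1 ≤ Λ ∧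
      (∀ s t : ℕ, Real.log ‖(coc f A s (f^[t] p) : X →L[ℝ] X)‖ ≤ s * Λ ∧
        Real.log ‖(((coc f A s (f^[t] p))⁻¹ : X ≃L[ℝ] X) : X →L[ℝ] X)‖ ≤ s * Λ) ∧
      (∀ n : ℕ, (n:ℝ) * lamP - J * (Λ + |lamP|) ≤ lA f A p n) ∧
      (∀ n : ℕ, -((n:ℝ) * lamM) - J * (Λ + |lamM|) ≤ lB f A p n) ∧
      (∀ x y : ℕ, lA f A p (x + y) ≤ lA f A p x + lA f A p y + 2 * J * Λ) ∧
      (∀ x y : ℕ, lB f A p (x + y) ≤ lB f A p x + lB f A p y + 2 * J * Λ) := by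
  set Λ : ℝ := 1 + ∑ t ∈ Finset.range J,
    (|Real.log ‖(A (f^[t] p) : X →L[ℝ] X)‖| +
     |Real.log ‖(((A (f^[t] p))⁻¹ : X ≃L[ℝ] X) : X →L[ℝ] X)‖|) with hΛdef
  have hsum0 : (0:ℝ) ≤ ∑ t ∈ Finset.range J,
      (|Real.log ‖(A (f^[t] p) : X →L[ℝ] X)‖| +
       |Real.log ‖(((A (f^[t] p))⁻¹ : X ≃L[ℝ] X) : X →L[ℝ] X)‖|) :=
    Finset.sum_nonneg (fun t _ => by positivity)
  have hΛ1 : 1 ≤ Λ := by rw [hΛdef]; linarith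
  have hΛ0 : 0 ≤ Λ := by linarith
  have hΛ : ∀ t : ℕ, Real.log ‖(A (f^[t] p) : X →L[ℝ] X)‖ ≤ Λ ∧
      Real.log ‖(((A (f^[t] p))⁻¹ : X ≃L[ℝ] X) : X →L[ℝ] X)‖ ≤ Λ := by
    intro t
    have hit : f^[t] p = f^[t % J] p := iter_mod f p J hp t
    have hmem : t % J ∈ Finset.range J := Finset.mem_range.mpr (Nat.mod_lt t hJ)
    have hterm := Finset.single_le_sum (f := fun t : ℕ =>
      (|Real.log ‖(A (f^[t] p) : X →L[ℝ] X)‖| +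
       |Real.log ‖(((A (f^[t] p))⁻¹ : X ≃L[ℝ] X) : X →L[ℝ] X)‖|))
      (fun r _ => by positivity) hmem
    rw [hit]
    constructor
    · calc Real.log ‖(A (f^[t % J] p) : X →L[ℝ] X)‖ ≤ |Real.log ‖(A (f^[t % J] p) : X →L[ℝ] X)‖| :=
            le_abs_self _
        _ ≤ Λ := by rw [hΛdef]; have h0 : (0:ℝ) ≤ |Real.log ‖(((A (f^[t % J] p))⁻¹ : X ≃L[ℝ] X) : X →L[ℝ] X)‖| := abs_nonneg _; linarith [hterm]
    · calc Real.log ‖(((A (f^[t % J] p))⁻¹ : X ≃L[ℝ] X) : X →L[ℝ] X)‖ ≤ _ := le_abs_self _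
        _ ≤ Λ := by rw [hΛdef]; have h0 : (0:ℝ) ≤ |Real.log ‖(A (f^[t % J] p) : X →L[ℝ] X)‖| := abs_nonneg _; linarith [hterm]
  have auxb := aux_coc_bound f A p Λ hΛ
  have hla0 : lA f A p 0 = 0 := by
    have h1 : coc f A 0 p = 1 := rfl
    show Real.log ‖(coc f A 0 p : X →L[ℝ] X)‖ = 0
    rw [h1]; exact gl_log_one
  have hlb0 : lB f A p 0 = 0 := by
    have h1 : (coc f A 0 p)⁻¹ = 1 := by
      show (1 : X ≃L[ℝ] X)⁻¹ = 1; exact inv_one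
    show Real.log ‖(((coc f A 0 p)⁻¹ : X ≃L[ℝ] X) : X →L[ℝ] X)‖ = 0
    rw [h1]; exact gl_log_one
  -- bounds for lA r, lB r with r < J
  have hlar : ∀ r : ℕ, lA f A p r ≤ r * Λ := by
    intro r
    have := (auxb r 0).1
    simpa [Function.iterate_zero_apply, lA] using this
  have hlbr : ∀ r : ℕ, lB f A p r ≤ r * Λ := by
    intro r
    have := (auxb r 0).2
    simpa [Function.iterate_zero_apply, lB] using this
  -- lA (y + r) ≤ lA y + r * Λ
  have hshiftA : ∀ y r : ℕ, lA f A p (y + r) ≤ lA f A p y + r * Λ := by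
    intro y r
    have h2 := coc_add f A y r p
    show Real.log ‖(coc f A (y + r) p : X →L[ℝ] X)‖ ≤ _
    rw [h2]
    calc Real.log ‖((coc f A r (f^[y] p) * coc f A y p : X ≃L[ℝ] X) : X →L[ℝ] X)‖
        ≤ Real.log ‖(coc f A r (f^[y] p) : X →L[ℝ] X)‖ + lA f A p y := gl_log_mul_le _ _
      _ ≤ r * Λ + lA f A p y := by linarith [(auxb r y).1]
      _ = lA f A p y + r * Λ := by ring
  have hshiftB : ∀ y r : ℕ, lB f A p (y + r) ≤ lB f A p y + r * Λ := by
    intro y r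
    have h2 := coc_add f A y r p
    show Real.log ‖(((coc f A (y + r) p)⁻¹ : X ≃L[ℝ] X) : X →L[ℝ] X)‖ ≤ _
    rw [h2, mul_inv_rev]
    calc Real.log ‖(((coc f A y p)⁻¹ * (coc f A r (f^[y] p))⁻¹ : X ≃L[ℝ] X) : X →L[ℝ] X)‖
        ≤ lB f A p y + Real.log ‖(((coc f A r (f^[y] p))⁻¹ : X ≃L[ℝ] X) : X →L[ℝ] X)‖ :=
          gl_log_mul_le _ _
      _ ≤ lB f A p y + r * Λ := by linarith [(auxb r y).2]
  -- prop1 / prop2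
  have prop1 : ∀ t y : ℕ, Real.log ‖(coc f A y (f^[t] p) : X →L[ℝ] X)‖
      ≤ lA f A p y + 2 * J * Λ := by
    intro t y
    set r := t % J with hr
    have hrJ : r < J := Nat.mod_lt t hJ
    have hit : f^[t] p = f^[r] p := iter_mod f p J hp t
    rw [hit]
    have hdec : coc f A y (f^[r] p) = coc f A (r + y) p * (coc f A r p)⁻¹ :=
      eq_mul_inv_of_mul_eq (coc_add f A r y p).symm
    rw [hdec]
    calc Real.log ‖((coc f A (r + y) p * (coc f A r p)⁻¹ : X ≃L[ℝ] X) : X →L[ℝ] X)‖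
        ≤ lA f A p (r + y) + lB f A p r := gl_log_mul_le _ _
      _ ≤ (lA f A p y + r * Λ) + r * Λ := by
          have h1 : lA f A p (r + y) = lA f A p (y + r) := by rw [Nat.add_comm]
          rw [h1]
          linarith [hshiftA y r, hlbr r]
      _ ≤ lA f A p y + 2 * J * Λ := by
          have hrR : (r:ℝ) ≤ J := by exact_mod_cast le_of_lt hrJ
          nlinarith [hΛ0]
  have prop2 : ∀ t y : ℕ, Real.log ‖(((coc f A y (f^[t] p))⁻¹ : X ≃L[ℝ] X) : X →L[ℝ] X)‖
      ≤ lB f A p y + 2 * J * Λ := by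
    intro t y
    set r := t % J with hr
    have hrJ : r < J := Nat.mod_lt t hJ
    have hit : f^[t] p = f^[r] p := iter_mod f p J hp t
    rw [hit]
    have hdec : coc f A y (f^[r] p) = coc f A (r + y) p * (coc f A r p)⁻¹ :=
      eq_mul_inv_of_mul_eq (coc_add f A r y p).symm
    rw [hdec, mul_inv_rev, inv_inv]
    calc Real.log ‖((coc f A r p * (coc f A (r + y) p)⁻¹ : X ≃L[ℝ] X) : X →L[ℝ] X)‖
        ≤ lA f A p r + lB f A p (r + y) := gl_log_mul_le _ _
      _ ≤ r * Λ + (lB f A p y + r * Λ) := by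
          have h1 : lB f A p (r + y) = lB f A p (y + r) := by rw [Nat.add_comm]
          rw [h1]
          linarith [hshiftB y r, hlar r]
      _ ≤ lB f A p y + 2 * J * Λ := by
          have hrR : (r:ℝ) ≤ J := by exact_mod_cast le_of_lt hrJ
          nlinarith [hΛ0]
  -- subadditivity
  have hsubA : ∀ x y : ℕ, lA f A p (x + y) ≤ lA f A p x + lA f A p y + 2 * J * Λ := by
    intro x y
    have h2 := coc_add f A x y p
    show Real.log ‖(coc f A (x + y) p : X →L[ℝ] X)‖ ≤ _
    rw [h2]
    calc Real.log ‖((coc f A y (f^[x] p) * coc f A x p : X ≃L[ℝ] X) : X →L[ℝ] X)‖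
        ≤ Real.log ‖(coc f A y (f^[x] p) : X →L[ℝ] X)‖ + lA f A p x := gl_log_mul_le _ _
      _ ≤ (lA f A p y + 2 * J * Λ) + lA f A p x := by linarith [prop1 x y]
      _ = lA f A p x + lA f A p y + 2 * J * Λ := by ring
  have hsubB : ∀ x y : ℕ, lB f A p (x + y) ≤ lB f A p x + lB f A p y + 2 * J * Λ := by
    intro x y
    have h2 := coc_add f A x y p
    show Real.log ‖(((coc f A (x + y) p)⁻¹ : X ≃L[ℝ] X) : X →L[ℝ] X)‖ ≤ _
    rw [h2, mul_inv_rev]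
    calc Real.log ‖(((coc f A x p)⁻¹ * (coc f A y (f^[x] p))⁻¹ : X ≃L[ℝ] X) : X →L[ℝ] X)‖
        ≤ lB f A p x + Real.log ‖(((coc f A y (f^[x] p))⁻¹ : X ≃L[ℝ] X) : X →L[ℝ] X)‖ :=
          gl_log_mul_le _ _
      _ ≤ lB f A p x + (lB f A p y + 2 * J * Λ) := by linarith [prop2 x y]
      _ = lB f A p x + lB f A p y + 2 * J * Λ := by ring
  -- exact subadditivity on J-multiples
  have hsubJA : ∀ x y : ℕ, J ∣ x → lA f A p (x + y) ≤ lA f A p y + lA f A p x := by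
    intro x y hdvd
    obtain ⟨q, rfl⟩ := hdvd
    have hfix : f^[J * q] p = p := by rw [Nat.mul_comm]; exact iter_mul_J f p J hp q
    have h2 := coc_add f A (J * q) y p
    rw [hfix] at h2
    show Real.log ‖(coc f A (J * q + y) p : X →L[ℝ] X)‖ ≤ _
    rw [h2]
    exact gl_log_mul_le _ _
  have hsubJB : ∀ x y : ℕ, J ∣ x → lB f A p (x + y) ≤ lB f A p y + lB f A p x := by
    intro x y hdvd
    obtain ⟨q, rfl⟩ := hdvd
    have hfix : f^[J * q] p = p := by rw [Nat.mul_comm]; exact iter_mul_J f p J hp q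
    have h2 := coc_add f A (J * q) y p
    rw [hfix] at h2
    show Real.log ‖(((coc f A (J * q + y) p)⁻¹ : X ≃L[ℝ] X) : X →L[ℝ] X)‖ ≤ _
    rw [h2, mul_inv_rev]
    calc Real.log ‖(((coc f A (J * q) p)⁻¹ * (coc f A y p)⁻¹ : X ≃L[ℝ] X) : X →L[ℝ] X)‖
        ≤ lB f A p (J * q) + lB f A p y := gl_log_mul_le _ _
      _ = lB f A p y + lB f A p (J * q) := by ring
  have feketeA := fekete_lb (lA f A p) lamP J hJ hla0 hsubJA hlamP
  have feketeB := fekete_lb (lB f A p) (-lamM) J hJ hlb0 hsubJB hlamM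
  -- lower bounds
  have hlowA : ∀ n : ℕ, (n:ℝ) * lamP - J * (Λ + |lamP|) ≤ lA f A p n := by
    intro n
    set k := n / J + 1 with hk
    have hmod := Nat.div_add_mod n J
    have hmlt : n % J < J := Nat.mod_lt n hJ
    have hkJ : k * J = J * (n / J) + J := by ring
    have hn1 : n ≤ k * J := by
      rw [hkJ]
      conv_lhs => rw [← hmod]
      exact Nat.add_le_add_left (le_of_lt hmlt) _
    have hn2 : k * J ≤ n + J := by
      rw [hkJ]
      conv_rhs => rw [← hmod]
      exact Nat.add_le_add_right (Nat.le_add_right _ _) J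
    set d := k * J - n with hd
    have hnd : n + d = k * J := Nat.add_sub_cancel' hn1
    have hdJ : d ≤ J := by omega
    have h1 : lA f A p (k * J) ≤ lA f A p n + d * Λ := by
      rw [← hnd]
      exact hshiftA n d
    have h2 : ((k * J : ℕ) : ℝ) * lamP ≤ lA f A p (k * J) := feketeA k
    have hcast : ((k * J : ℕ) : ℝ) = (n:ℝ) + d := by
      rw [← hnd]; push_cast; ring
    rw [hcast] at h2
    have hd0 : (0:ℝ) ≤ (d:ℝ) := Nat.cast_nonneg d
    have hdJ' : (d:ℝ) ≤ J := by exact_mod_cast hdJ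
    have h3 : (d:ℝ) * lamP ≥ -((d:ℝ) * |lamP|) := by
      have := mul_le_mul_of_nonneg_left (neg_abs_le lamP) hd0
      linarith
    have h4 : (d:ℝ) * Λ ≤ (J:ℝ) * Λ := mul_le_mul_of_nonneg_right hdJ' hΛ0
    have h5 : (d:ℝ) * |lamP| ≤ (J:ℝ) * |lamP| := mul_le_mul_of_nonneg_right hdJ' (abs_nonneg _)
    nlinarith [h1, h2]
  have hlowB : ∀ n : ℕ, -((n:ℝ) * lamM) - J * (Λ + |lamM|) ≤ lB f A p n := by
    intro n
    set k := n / J + 1 with hk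
    have hmod := Nat.div_add_mod n J
    have hmlt : n % J < J := Nat.mod_lt n hJ
    have hkJ : k * J = J * (n / J) + J := by ring
    have hn1 : n ≤ k * J := by
      rw [hkJ]
      conv_lhs => rw [← hmod]
      exact Nat.add_le_add_left (le_of_lt hmlt) _
    have hn2 : k * J ≤ n + J := by
      rw [hkJ]
      conv_rhs => rw [← hmod]
      exact Nat.add_le_add_right (Nat.le_add_right _ _) J
    set d := k * J - n with hd
    have hnd : n + d = k * J := Nat.add_sub_cancel' hn1
    have hdJ : d ≤ J := by omega
    have h1 : lB f A p (k * J) ≤ lB f A p n + d * Λ := by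
      rw [← hnd]
      exact hshiftB n d
    have h2 : ((k * J : ℕ) : ℝ) * (-lamM) ≤ lB f A p (k * J) := feketeB k
    have hcast : ((k * J : ℕ) : ℝ) = (n:ℝ) + d := by
      rw [← hnd]; push_cast; ring
    rw [hcast] at h2
    have hd0 : (0:ℝ) ≤ (d:ℝ) := Nat.cast_nonneg d
    have hdJ' : (d:ℝ) ≤ J := by exact_mod_cast hdJ
    have h3 : (d:ℝ) * (-lamM) ≥ -((d:ℝ) * |lamM|) := by
      have := mul_le_mul_of_nonneg_left (neg_abs_le (-lamM)) hd0
      rw [abs_neg] at this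
      linarith
    have h4 : (d:ℝ) * Λ ≤ (J:ℝ) * Λ := mul_le_mul_of_nonneg_right hdJ' hΛ0
    have h5 : (d:ℝ) * |lamM| ≤ (J:ℝ) * |lamM| := mul_le_mul_of_nonneg_right hdJ' (abs_nonneg _)
    nlinarith [h1, h2]
  exact ⟨Λ, hΛ1, auxb, hlowA, hlowB, hsubA, hsubB⟩

end Pack

section Extra
open Filter Topology
open scoped Classical

lemma ncard_Iio_nat (N : ℕ) : (Set.Iio N).ncard = N := by
  have h : (Set.Iio N) = ↑(Finset.range N) := by ext x; simp
  rw [h, Set.ncard_coe_finset, Finset.card_range]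

lemma ncard_inter_Iio_eq (S : Set ℕ) (N : ℕ) :
    (S ∩ Set.Iio N).ncard = ((Finset.range N).filter (fun n => n ∈ S)).card := by
  have h : S ∩ Set.Iio N = ↑((Finset.range N).filter (fun n => n ∈ S)) := by
    ext x
    simp [Set.mem_Iio, and_comm]
  rw [h, Set.ncard_coe_finset]

lemma gsum_half (N : ℕ) : ∑ k ∈ Finset.Icc 1 N, ((2:ℝ)⁻¹)^k = 1 - ((2:ℝ)⁻¹)^N := by
  induction N with
  | zero => simp
  | succ N ih =>
    rw [show Finset.Icc 1 (N+1) = insert (N+1) (Finset.Icc 1 N) by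
        ext x; simp [Finset.mem_Icc, Finset.mem_insert]; omega,
      Finset.sum_insert (by simp), ih]
    rw [pow_succ]
    ring
end Extra

set_option maxHeartbeats 2000000 in
lemma stmt10_aux {M : Type*} {X : Type*} [NormedAddCommGroup X] [NormedSpace ℝ X]
    [Nontrivial X]
    (f : M → M) (A : M → (X ≃L[ℝ] X))
    (p : M) (J : ℕ) (hJ : 0 < J) (hp : f^[J] p = p)
    (lamP lamM : ℝ)
    (hlamP : Tendsto (fun n : ℕ =>
      (n : ℝ)⁻¹ * Real.log ‖(coc f A n p : X →L[ℝ] X)‖) atTop (𝓝 lamP))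
    (hlamM : Tendsto (fun n : ℕ =>
      (n : ℝ)⁻¹ * Real.log ‖(((coc f A n p)⁻¹ : X ≃L[ℝ] X) : X →L[ℝ] X)‖) atTop (𝓝 (-lamM)))
    (ρ : ℝ) (hρ : 0 < ρ) :
    ∃ ε : ℕ → ℝ, (∀ i, 0 ≤ ε i) ∧ Tendsto ε atTop (𝓝 0) ∧
      ∃ Sp : Set ℕ, 1 - ρ < upperDens Sp ∧
        ∀ n ∈ Sp, ∀ i ≤ n,
          ‖(coc f A (n - i) (f^[i] p) : X →L[ℝ] X)‖ ≤
            ‖(coc f A n p : X →L[ℝ] X)‖ * Real.exp ((-lamP + ε i) * (i : ℝ)) ∧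
          ‖(((coc f A (n - i) (f^[i] p))⁻¹ : X ≃L[ℝ] X) : X →L[ℝ] X)‖ ≤
            ‖(((coc f A n p)⁻¹ : X ≃L[ℝ] X) : X →L[ℝ] X)‖ * Real.exp ((lamM + ε i) * (i : ℝ)) := by
  classical
obtain ⟨Λ, hΛ1, auxb, hlowA, hlowB, hsubA, hsubB⟩ :=
  analytic_pack f A p J hJ hp lamP lamM hlamP hlamM
have hΛ0 : (0:ℝ) ≤ Λ := by linarith
set Γ₁ : ℝ := Λ + |lamP| + |lamM| with hΓ₁def
have hΓ₁pos : 0 < Γ₁ := by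
  have := abs_nonneg lamP; have := abs_nonneg lamM; rw [hΓ₁def]; linarith
set K : ℝ := (J:ℝ) * Γ₁ with hKdef
have hJR : (0:ℝ) < (J:ℝ) := by exact_mod_cast hJ
have hK0 : 0 ≤ K := by positivity
set C0 : ℝ := (J:ℝ) * (Λ + |lamP|) with hC0def
set C1 : ℝ := (J:ℝ) * (Λ + |lamM|) with hC1def
have hC00 : 0 ≤ C0 := by positivity
have hC10 : 0 ≤ C1 := by positivity
set CC : ℝ := 2 * (J:ℝ) * Λ with hCCdef
have hCC0 : 0 ≤ CC := by positivity
obtain ⟨wu, hwudef⟩ : ∃ w : ℕ → ℝ, w = fun n => lA f A p n - n * lamP + C0 := ⟨_, rfl⟩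
obtain ⟨wv, hwvdef⟩ : ∃ w : ℕ → ℝ, w = fun n => lB f A p n + n * lamM + C1 := ⟨_, rfl⟩
have hwu0 : ∀ n, 0 ≤ wu n := by
  intro n; have := hlowA n; simp only [hwudef]; linarith
have hwv0 : ∀ n, 0 ≤ wv n := by
  intro n; have := hlowB n; simp only [hwvdef]; linarith
have hwusub : ∀ x y : ℕ, wu (x + y) ≤ wu x + wu y + CC := by
  intro x y
  have h1 := hsubA x y
  simp only [hwudef]
  push_cast
  linarith
have hwvsub : ∀ x y : ℕ, wv (x + y) ≤ wv x + wv y + CC := by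
  intro x y
  have h1 := hsubB x y
  simp only [hwvdef]
  push_cast
  linarith
have hinv : Tendsto (fun n : ℕ => ((n:ℝ))⁻¹) atTop (𝓝 0) :=
  tendsto_inv_atTop_nhds_zero_nat
have hwulim : Tendsto (fun n : ℕ => wu n / n) atTop (𝓝 0) := by
  have t1 : Tendsto (fun n : ℕ => (n:ℝ)⁻¹ * lA f A p n - lamP + C0 * (n:ℝ)⁻¹)
      atTop (𝓝 (lamP - lamP + C0 * 0)) :=
    ((hlamP.sub tendsto_const_nhds).add (hinv.const_mul C0))
  have t2 : lamP - lamP + C0 * 0 = 0 := by ring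
  rw [t2] at t1
  apply t1.congr'
  filter_upwards [eventually_ge_atTop 1] with n hn
  have hn0 : ((n:ℕ):ℝ) ≠ 0 := by simp only [ne_eq, Nat.cast_eq_zero]; omega
  simp only [hwudef]
  field_simp
  try ring
have hwvlim : Tendsto (fun n : ℕ => wv n / n) atTop (𝓝 0) := by
  have t1 : Tendsto (fun n : ℕ => (n:ℝ)⁻¹ * lB f A p n + lamM + C1 * (n:ℝ)⁻¹)
      atTop (𝓝 (-lamM + lamM + C1 * 0)) :=
    ((hlamM.add tendsto_const_nhds).add (hinv.const_mul C1))
  have t2 : -lamM + lamM + C1 * 0 = 0 := by ring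
  rw [t2] at t1
  apply t1.congr'
  filter_upwards [eventually_ge_atTop 1] with n hn
  have hn0 : ((n:ℕ):ℝ) ≠ 0 := by simp only [ne_eq, Nat.cast_eq_zero]; omega
  simp only [hwvdef]
  field_simp
  try ring
-- choose the scales T k
have hex : ∀ k : ℕ, ∃ Tk : ℕ, 1 ≤ Tk ∧ k ≤ Tk ∧
    (∀ N : ℕ, (((Finset.range N).filter
      (fun n => ∃ m, m + Tk ≤ n ∧ ((2:ℝ)⁻¹)^k * ((n:ℝ) - m) < wu m - wu n)).card : ℝ)
        ≤ ρ/8 * ((2:ℝ)⁻¹)^k * N) ∧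
    (∀ N : ℕ, (((Finset.range N).filter
      (fun n => ∃ m, m + Tk ≤ n ∧ ((2:ℝ)⁻¹)^k * ((n:ℝ) - m) < wv m - wv n)).card : ℝ)
        ≤ ρ/8 * ((2:ℝ)⁻¹)^k * N) := by
  intro k
  have hδk : (0:ℝ) < ((2:ℝ)⁻¹)^k := by positivity
  have hαk : (0:ℝ) < ρ/8 * ((2:ℝ)⁻¹)^k := by positivity
  obtain ⟨Tu, hTu1, hTu⟩ := core_wrap wu CC hwu0 hCC0 hwusub hwulim _ _ hδk hαk
  obtain ⟨Tv, hTv1, hTv⟩ := core_wrap wv CC hwv0 hCC0 hwvsub hwvlim _ _ hδk hαk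
  refine ⟨max (max Tu Tv) k, le_trans hTu1 (le_trans (le_max_left _ _) (le_max_left _ _)),
    le_max_right _ _, ?_, ?_⟩
  · intro N
    refine le_trans ?_ (hTu N)
    have hsubset : ((Finset.range N).filter
        (fun n => ∃ m, m + max (max Tu Tv) k ≤ n ∧ ((2:ℝ)⁻¹)^k * ((n:ℝ) - m) < wu m - wu n))
        ⊆ ((Finset.range N).filter
        (fun n => ∃ m, m + Tu ≤ n ∧ ((2:ℝ)⁻¹)^k * ((n:ℝ) - m) < wu m - wu n)) := by
      intro x hx
      obtain ⟨hxr, m, hm, hlt⟩ := Finset.mem_filter.mp hx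
      exact Finset.mem_filter.mpr ⟨hxr, m, by omega, hlt⟩
    exact_mod_cast Finset.card_le_card hsubset
  · intro N
    refine le_trans ?_ (hTv N)
    have hsubset : ((Finset.range N).filter
        (fun n => ∃ m, m + max (max Tu Tv) k ≤ n ∧ ((2:ℝ)⁻¹)^k * ((n:ℝ) - m) < wv m - wv n))
        ⊆ ((Finset.range N).filter
        (fun n => ∃ m, m + Tv ≤ n ∧ ((2:ℝ)⁻¹)^k * ((n:ℝ) - m) < wv m - wv n)) := by
      intro x hx
      obtain ⟨hxr, m, hm, hlt⟩ := Finset.mem_filter.mp hx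
      exact Finset.mem_filter.mpr ⟨hxr, m, by omega, hlt⟩
    exact_mod_cast Finset.card_le_card hsubset
choose T hT1 hTge hTu hTv using hex
-- the good set
obtain ⟨S, hSdef⟩ : ∃ S : Set ℕ, S = {n | ∀ k : ℕ, 1 ≤ k →
    (∀ m, m + T k ≤ n → wu m - wu n ≤ ((2:ℝ)⁻¹)^k * ((n:ℝ) - m)) ∧
    (∀ m, m + T k ≤ n → wv m - wv n ≤ ((2:ℝ)⁻¹)^k * ((n:ℝ) - m))} := ⟨_, rfl⟩
-- counting
have hcount : ∀ N : ℕ, (((Finset.range N).filter (fun n => n ∉ S)).card : ℝ) ≤ ρ/4 * N := by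
  intro N
  set FU : ℕ → Finset ℕ := fun k => ((Finset.range N).filter
      (fun n => ∃ m, m + T k ≤ n ∧ ((2:ℝ)⁻¹)^k * ((n:ℝ) - m) < wu m - wu n)) with hFUdef
  set FV : ℕ → Finset ℕ := fun k => ((Finset.range N).filter
      (fun n => ∃ m, m + T k ≤ n ∧ ((2:ℝ)⁻¹)^k * ((n:ℝ) - m) < wv m - wv n)) with hFVdef
  have hsubset : ((Finset.range N).filter (fun n => n ∉ S)) ⊆
      (Finset.Icc 1 N).biUnion (fun k => FU k ∪ FV k) := by
    intro x hx
    obtain ⟨hxr, hxS⟩ := Finset.mem_filter.mp hx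
    have hxN := Finset.mem_range.mp hxr
    simp only [hSdef, Set.mem_setOf_eq] at hxS
    push_neg at hxS
    obtain ⟨k, hk1, hk2⟩ := hxS
    have hcases : (∃ m, m + T k ≤ x ∧ ((2:ℝ)⁻¹)^k * ((x:ℝ) - m) < wu m - wu x) ∨
        (∃ m, m + T k ≤ x ∧ ((2:ℝ)⁻¹)^k * ((x:ℝ) - m) < wv m - wv x) := by
      by_cases hA : ∀ m, m + T k ≤ x → wu m - wu x ≤ ((2:ℝ)⁻¹)^k * ((x:ℝ) - m)
      · right
        have hB := hk2 hA
        obtain ⟨m, hm1, hm2⟩ := hB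
        exact ⟨m, hm1, hm2⟩
      · left
        push_neg at hA
        obtain ⟨m, hm1, hm2⟩ := hA
        exact ⟨m, hm1, hm2⟩
    have hkx : k ≤ x := by
      rcases hcases with ⟨m, hm, _⟩ | ⟨m, hm, _⟩ <;>
        · have := hTge k; omega
    rw [Finset.mem_biUnion]
    refine ⟨k, Finset.mem_Icc.mpr ⟨hk1, by omega⟩, ?_⟩
    rcases hcases with h | h
    · exact Finset.mem_union_left _ (Finset.mem_filter.mpr ⟨hxr, h⟩)
    · exact Finset.mem_union_right _ (Finset.mem_filter.mpr ⟨hxr, h⟩)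
  have hcard1 : (((Finset.range N).filter (fun n => n ∉ S)).card : ℝ)
      ≤ ∑ k ∈ Finset.Icc 1 N, (((FU k).card : ℝ) + ((FV k).card : ℝ)) := by
    have h1 : ((Finset.range N).filter (fun n => n ∉ S)).card
        ≤ ∑ k ∈ Finset.Icc 1 N, (FU k ∪ FV k).card :=
      le_trans (Finset.card_le_card hsubset) Finset.card_biUnion_le
    have h2 : ∀ k, ((FU k ∪ FV k).card : ℝ) ≤ ((FU k).card : ℝ) + ((FV k).card : ℝ) := by
      intro k
      exact_mod_cast Finset.card_union_le _ _
    calc (((Finset.range N).filter (fun n => n ∉ S)).card : ℝ)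
        ≤ ((∑ k ∈ Finset.Icc 1 N, (FU k ∪ FV k).card : ℕ) : ℝ) := by exact_mod_cast h1
      _ = ∑ k ∈ Finset.Icc 1 N, ((FU k ∪ FV k).card : ℝ) := by push_cast; rfl
      _ ≤ _ := Finset.sum_le_sum (fun k _ => h2 k)
  have hcard2 : ∑ k ∈ Finset.Icc 1 N, (((FU k).card : ℝ) + ((FV k).card : ℝ))
      ≤ ∑ k ∈ Finset.Icc 1 N, (ρ/4 * N * ((2:ℝ)⁻¹)^k) := by
    apply Finset.sum_le_sum
    intro k _
    have h1 := hTu k N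
    have h2 := hTv k N
    have e1 : ρ/4 * N * ((2:ℝ)⁻¹)^k = ρ/8 * ((2:ℝ)⁻¹)^k * N + ρ/8 * ((2:ℝ)⁻¹)^k * N := by
      ring
    rw [e1]
    exact add_le_add h1 h2
  have hgeom : ∑ k ∈ Finset.Icc 1 N, (ρ/4 * N * ((2:ℝ)⁻¹)^k) ≤ ρ/4 * N := by
    rw [← Finset.mul_sum, gsum_half]
    have hpow : (0:ℝ) ≤ ((2:ℝ)⁻¹)^N := by positivity
    have hρN : (0:ℝ) ≤ ρ/4 * N := by positivity
    nlinarith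
  linarith
have hgoodcard : ∀ N : ℕ, ((N:ℝ)) - ρ/4 * N
    ≤ (((Finset.range N).filter (fun n => n ∈ S)).card : ℝ) := by
  intro N
  have h1 := Finset.card_filter_add_card_filter_not
    (s := Finset.range N) (p := fun n => n ∈ S)
  rw [Finset.card_range] at h1
  have h2 := hcount N
  have h3 : (((Finset.range N).filter (fun n => n ∈ S)).card : ℝ)
      + (((Finset.range N).filter (fun n => ¬ n ∈ S)).card : ℝ) = (N:ℝ) := by
    exact_mod_cast congrArg (fun x : ℕ => (x:ℝ)) h1
  linarith
have hDens : 1 - ρ < upperDens S := by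
  have hle : ∀ N : ℕ, 1 ≤ N → 1 - ρ/4 ≤ ((S ∩ Set.Iio N).ncard : ℝ) / N := by
    intro N hN
    rw [ncard_inter_Iio_eq]
    have hN0 : (0:ℝ) < N := by exact_mod_cast hN
    rw [le_div_iff₀ hN0]
    have h1 := hgoodcard N
    have h2 : (1 - ρ/4) * N = (N:ℝ) - ρ/4 * N := by ring
    linarith
  have hfreq : ∃ᶠ N : ℕ in atTop, 1 - ρ/4 ≤ ((S ∩ Set.Iio N).ncard : ℝ) / N := by
    apply Filter.Eventually.frequently
    filter_upwards [eventually_ge_atTop 1] with N hN using hle N hN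
  have hbdd : IsBoundedUnder (· ≤ ·) atTop (fun N : ℕ => ((S ∩ Set.Iio N).ncard : ℝ) / N) := by
    apply isBoundedUnder_of
    refine ⟨1, fun N => ?_⟩
    rcases Nat.eq_zero_or_pos N with h | h
    · subst h; simp
    · have hN0 : (0:ℝ) < N := by exact_mod_cast h
      rw [div_le_one hN0]
      have h1 : (S ∩ Set.Iio N).ncard ≤ (Set.Iio N).ncard :=
        Set.ncard_le_ncard Set.inter_subset_right (Set.finite_Iio N)
      rw [ncard_Iio_nat] at h1
      exact_mod_cast h1
  have hlim2 := le_limsup_of_frequently_le hfreq hbdd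
  have : (1:ℝ) - ρ < 1 - ρ/4 := by linarith
  exact lt_of_lt_of_le this hlim2
-- epsilon sequence
obtain ⟨fg, hfgdef⟩ : ∃ g : ℕ → ℕ, g = fun i => Nat.findGreatest (fun k => 0 < k ∧ T k + J ≤ i) i := ⟨_, rfl⟩
obtain ⟨Del, hDeldef⟩ : ∃ d : ℕ → ℝ, d = fun j => if j = 0 then Γ₁ else ((2:ℝ)⁻¹)^j := ⟨_, rfl⟩
have hDel0 : ∀ j, 0 ≤ Del j := by
  intro j
  simp only [hDeldef]
  split
  · linarith
  · positivity
obtain ⟨eps, hepsdef⟩ : ∃ e : ℕ → ℝ, e = fun i => Del (fg i) + K / ((max i 1 : ℕ) : ℝ) := ⟨_, rfl⟩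
have heps0 : ∀ i, 0 ≤ eps i := by
  intro i
  simp only [hepsdef]
  have h1 : (0:ℝ) ≤ K / ((max i 1 : ℕ):ℝ) := by positivity
  linarith [hDel0 (fg i)]
have hepslim : Tendsto eps atTop (𝓝 0) := by
  rw [Metric.tendsto_atTop]
  intro η hη
  obtain ⟨k0, hk0⟩ := exists_pow_lt_of_lt_one (show (0:ℝ) < η/4 by linarith)
    (show (2:ℝ)⁻¹ < 1 by norm_num)
  set k1 := k0 + 1 with hk1def
  have hk1pow : ((2:ℝ)⁻¹)^k1 < η/4 := lt_of_le_of_lt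
    (pow_le_pow_of_le_one (by norm_num) (by norm_num) (by omega)) hk0
  refine ⟨max (T k1 + J) (max k1 (⌈2*K/η⌉₊ + 1)), fun i hi => ?_⟩
  have hiT : T k1 + J ≤ i := le_trans (le_max_left _ _) hi
  have hik1 : k1 ≤ i := le_trans (le_trans (le_max_left _ _) (le_max_right _ _)) hi
  have hiceil : ⌈2*K/η⌉₊ + 1 ≤ i := le_trans (le_trans (le_max_right _ _) (le_max_right _ _)) hi
  have hi1 : 1 ≤ i := by omega
  have hfgge : k1 ≤ fg i := by
    simp only [hfgdef]
    exact Nat.le_findGreatest (by omega) ⟨by omega, hiT⟩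
  have hfgne : fg i ≠ 0 := by omega
  have hDeli : Del (fg i) = ((2:ℝ)⁻¹)^(fg i) := by simp [hDeldef, hfgne]
  have hDelile : ((2:ℝ)⁻¹)^(fg i) ≤ ((2:ℝ)⁻¹)^k1 :=
    pow_le_pow_of_le_one (by norm_num) (by norm_num) hfgge
  have hmaxi : (max i 1 : ℕ) = i := by omega
  have hiR : (0:ℝ) < i := by exact_mod_cast hi1
  have hKterm : K / (i:ℝ) < η/2 := by
    rw [div_lt_iff₀ hiR]
    have hceil : (2*K/η : ℝ) ≤ (⌈2*K/η⌉₊ : ℝ) := Nat.le_ceil _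
    have hige : ((⌈2*K/η⌉₊ : ℕ) : ℝ) + 1 ≤ (i:ℝ) := by exact_mod_cast hiceil
    have h2 : 2*K/η < (i:ℝ) := by linarith
    have h3 : 2*K < (i:ℝ) * η := (div_lt_iff₀ hη).mp h2
    linarith
  rw [Real.dist_eq, sub_zero, abs_of_nonneg (heps0 i)]
  simp only [hepsdef]
  rw [hmaxi, hDeli]
  calc ((2:ℝ)⁻¹)^(fg i) + K / (i:ℝ) < η/4 + η/2 := by
        apply add_lt_add_of_le_of_lt (le_trans hDelile (le_of_lt hk1pow)) hKterm
    _ < η := by linarith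
refine ⟨eps, heps0, hepslim, S, hDens, ?_⟩
intro n hn i hi
simp only [hSdef, Set.mem_setOf_eq] at hn
rcases Nat.eq_zero_or_pos i with hi0 | hi1
· subst hi0
  simp only [Nat.sub_zero, Function.iterate_zero_apply, Nat.cast_zero, mul_zero,
    Real.exp_zero, mul_one]
  exact ⟨le_refl _, le_refl _⟩
set s := i % J with hsdef
have hsJ : s < J := Nat.mod_lt i hJ
have hsi : s ≤ i := Nat.mod_le i J
set m := s + (n - i) with hmdef
have hmn : m ≤ n := by omega
have hfi : f^[i] p = f^[s] p := iter_mod f p J hp i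
have hdec : coc f A (n - i) (f^[s] p) = coc f A m p * (coc f A s p)⁻¹ :=
  eq_mul_inv_of_mul_eq (coc_add f A s (n - i) p).symm
have hcastm : (m:ℝ) = (s:ℝ) + (n:ℝ) - (i:ℝ) := by
  simp only [hmdef]
  push_cast [Nat.cast_sub hi]
  ring
have hs0 : (0:ℝ) ≤ s := Nat.cast_nonneg s
have hsR : (s:ℝ) ≤ J := by exact_mod_cast le_of_lt hsJ
have hnmi : ((n:ℝ) - (m:ℝ)) ≤ i := by rw [hcastm]; linarith
have hnm0 : (0:ℝ) ≤ (n:ℝ) - m := by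
  have : (m:ℝ) ≤ n := by exact_mod_cast hmn
  linarith
have hiR : (0:ℝ) < i := by exact_mod_cast hi1
have hepsi : eps i * (i:ℝ) = Del (fg i) * i + K := by
  have hmaxi : (max i 1 : ℕ) = i := by omega
  simp only [hepsdef]
  rw [hmaxi]
  field_simp
-- increment bound ingredients
have hh := coc_add f A m (n - m) p
rw [Nat.add_sub_cancel' hmn] at hh
have hmm : coc f A m p = (coc f A (n - m) (f^[m] p))⁻¹ * coc f A n p :=
  eq_inv_mul_of_mul_eq hh.symm
have hcastnm : ((n - m : ℕ):ℝ) = (n:ℝ) - m := Nat.cast_sub hmn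
-- key bound for wu
have hkeyu : wu m - wu n ≤ Del (fg i) * i := by
  rcases Nat.eq_zero_or_pos (fg i) with hfg0 | hfgpos
  · have hDel : Del (fg i) = Γ₁ := by simp [hDeldef, hfg0]
    have h1 : Real.log ‖(coc f A m p : X →L[ℝ] X)‖
        ≤ ((n - m : ℕ):ℝ) * Λ + Real.log ‖(coc f A n p : X →L[ℝ] X)‖ := by
      rw [hmm]
      exact le_trans (gl_log_mul_le _ _) (add_le_add_left (auxb (n - m) m).2 _)
    rw [hcastnm] at h1
    have t1 : ((n:ℝ) - m) * lamP ≤ ((n:ℝ) - m) * |lamP| :=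
      mul_le_mul_of_nonneg_left (le_abs_self _) hnm0
    have t2 : ((n:ℝ) - m) * Λ + ((n:ℝ) - m) * |lamP| ≤ ((n:ℝ) - m) * Γ₁ := by
      have hle : Λ + |lamP| ≤ Γ₁ := by rw [hΓ₁def]; linarith [abs_nonneg lamM]
      have h2 := mul_le_mul_of_nonneg_left hle hnm0
      have h3 : ((n:ℝ) - m) * (Λ + |lamP|) = ((n:ℝ) - m) * Λ + ((n:ℝ) - m) * |lamP| := by ring
      linarith
    have t3 : ((n:ℝ) - m) * Γ₁ ≤ (i:ℝ) * Γ₁ :=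
      mul_le_mul_of_nonneg_right hnmi (le_of_lt hΓ₁pos)
    have hwum : wu m - wu n = Real.log ‖(coc f A m p : X →L[ℝ] X)‖
        - Real.log ‖(coc f A n p : X →L[ℝ] X)‖ + ((n:ℝ) - m) * lamP := by
      simp only [hwudef]
      simp only [lA]
      ring
    rw [hDel, hwum]
    linarith
  · have hfgne : fg i ≠ 0 := by omega
    have hwit : ¬ (∀ k', 0 < k' → k' ≤ i → ¬(0 < k' ∧ T k' + J ≤ i)) := by
      intro hall
      have h0 : fg i = 0 := by
        simp only [hfgdef]
        exact Nat.findGreatest_eq_zero_iff.mpr (fun {k'} h1 h2 => hall k' h1 h2)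
      exact hfgne h0
    push_neg at hwit
    obtain ⟨k', hk'pos, hk'le, hk'P⟩ := hwit
    have hPfg : 0 < fg i ∧ T (fg i) + J ≤ i := by
      simp only [hfgdef]
      exact Nat.findGreatest_spec (P := fun k => 0 < k ∧ T k + J ≤ i) hk'le hk'P
    have hTfg : T (fg i) + J ≤ i := hPfg.2
    have hfgk1 : 1 ≤ fg i := hPfg.1
    have hge : m + T (fg i) ≤ n := by omega
    have hSn := (hn (fg i) hfgk1).1 m hge
    have hDel : Del (fg i) = ((2:ℝ)⁻¹)^(fg i) := by simp [hDeldef, hfgne]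
    have hmono : ((2:ℝ)⁻¹)^(fg i) * ((n:ℝ) - m) ≤ ((2:ℝ)⁻¹)^(fg i) * i :=
      mul_le_mul_of_nonneg_left hnmi (by positivity)
    rw [hDel]
    linarith
-- key bound for wv
have hkeyv : wv m - wv n ≤ Del (fg i) * i := by
  rcases Nat.eq_zero_or_pos (fg i) with hfg0 | hfgpos
  · have hDel : Del (fg i) = Γ₁ := by simp [hDeldef, hfg0]
    have hmminv : ((coc f A m p)⁻¹ : X ≃L[ℝ] X)
        = (coc f A n p)⁻¹ * coc f A (n - m) (f^[m] p) := by
      rw [hmm, mul_inv_rev, inv_inv]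
    have h1 : lB f A p m ≤ lB f A p n + ((n - m : ℕ):ℝ) * Λ := by
      simp only [lB]
      rw [hmminv]
      exact le_trans (gl_log_mul_le _ _) (add_le_add_right (auxb (n - m) m).1 _)
    rw [hcastnm] at h1
    have t1 : -(((n:ℝ) - m) * lamM) ≤ ((n:ℝ) - m) * |lamM| := by
      have := mul_le_mul_of_nonneg_left (neg_abs_le lamM) hnm0
      linarith [this]
    have t2 : ((n:ℝ) - m) * Λ + ((n:ℝ) - m) * |lamM| ≤ ((n:ℝ) - m) * Γ₁ := by
      have hle : Λ + |lamM| ≤ Γ₁ := by rw [hΓ₁def]; linarith [abs_nonneg lamP]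
      have h2 := mul_le_mul_of_nonneg_left hle hnm0
      have h3 : ((n:ℝ) - m) * (Λ + |lamM|) = ((n:ℝ) - m) * Λ + ((n:ℝ) - m) * |lamM| := by ring
      linarith
    have t3 : ((n:ℝ) - m) * Γ₁ ≤ (i:ℝ) * Γ₁ :=
      mul_le_mul_of_nonneg_right hnmi (le_of_lt hΓ₁pos)
    have hwvm : wv m - wv n = lB f A p m - lB f A p n - ((n:ℝ) - m) * lamM := by
      simp only [hwvdef]
      ring
    rw [hDel, hwvm]
    linarith
  · have hfgne : fg i ≠ 0 := by omega
    have hwit : ¬ (∀ k', 0 < k' → k' ≤ i → ¬(0 < k' ∧ T k' + J ≤ i)) := by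
      intro hall
      have h0 : fg i = 0 := by
        simp only [hfgdef]
        exact Nat.findGreatest_eq_zero_iff.mpr (fun {k'} h1 h2 => hall k' h1 h2)
      exact hfgne h0
    push_neg at hwit
    obtain ⟨k', hk'pos, hk'le, hk'P⟩ := hwit
    have hPfg : 0 < fg i ∧ T (fg i) + J ≤ i := by
      simp only [hfgdef]
      exact Nat.findGreatest_spec (P := fun k => 0 < k ∧ T k + J ≤ i) hk'le hk'P
    have hTfg : T (fg i) + J ≤ i := hPfg.2
    have hfgk1 : 1 ≤ fg i := hPfg.1
    have hge : m + T (fg i) ≤ n := by omega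
    have hSn := (hn (fg i) hfgk1).2 m hge
    have hDel : Del (fg i) = ((2:ℝ)⁻¹)^(fg i) := by simp [hDeldef, hfgne]
    have hmono : ((2:ℝ)⁻¹)^(fg i) * ((n:ℝ) - m) ≤ ((2:ℝ)⁻¹)^(fg i) * i :=
      mul_le_mul_of_nonneg_left hnmi (by positivity)
    rw [hDel]
    linarith
have hlbs : lB f A p s ≤ s * Λ := by
  have h := (auxb s 0).2
  simpa [lB] using h
have hlas : lA f A p s ≤ s * Λ := by
  have h := (auxb s 0).1
  simpa [lA] using h
have hp2 : (s:ℝ)*Λ ≤ (J:ℝ)*Λ := mul_le_mul_of_nonneg_right hsR hΛ0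
constructor
· -- first norm inequality
  have hnorm1 : ‖(coc f A (n - i) (f^[i] p) : X →L[ℝ] X)‖
      ≤ Real.exp (lA f A p m + lB f A p s) := by
    rw [hfi, hdec]
    have hpos := gl_norm_pos ((coc f A m p * (coc f A s p)⁻¹ : X ≃L[ℝ] X))
    rw [← Real.exp_log hpos]
    exact Real.exp_le_exp.mpr (gl_log_mul_le _ _)
  refine le_trans hnorm1 ?_
  have hrhs : ‖(coc f A n p : X →L[ℝ] X)‖ * Real.exp ((-lamP + eps i) * i)
      = Real.exp (lA f A p n + (-lamP + eps i) * i) := by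
    rw [Real.exp_add]
    congr 1
    simp only [lA]
    rw [Real.exp_log (gl_norm_pos _)]
  rw [hrhs, Real.exp_le_exp]
  have e1 : lA f A p m = wu m + (m:ℝ)*lamP - C0 := by simp only [hwudef]; ring
  have e2 : lA f A p n = wu n + (n:ℝ)*lamP - C0 := by simp only [hwudef]; ring
  have hx : (-lamP + eps i) * (i:ℝ) = -(lamP * i) + eps i * i := by ring
  rw [e1, e2, hx, hepsi]
  have hmlam : (m:ℝ)*lamP = (s:ℝ)*lamP + (n:ℝ)*lamP - (i:ℝ)*lamP := by
    rw [hcastm]; ring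
  have hp1 : (s:ℝ)*lamP ≤ (J:ℝ)*|lamP| := by
    have u1 : (s:ℝ)*lamP ≤ (s:ℝ)*|lamP| := mul_le_mul_of_nonneg_left (le_abs_self _) hs0
    have u2 : (s:ℝ)*|lamP| ≤ (J:ℝ)*|lamP| := mul_le_mul_of_nonneg_right hsR (abs_nonneg _)
    linarith
  have hKexp : (J:ℝ)*|lamP| + (J:ℝ)*Λ ≤ K := by
    have h0 : (0:ℝ) ≤ (J:ℝ) * |lamM| := by positivity
    have h1 : K = (J:ℝ)*Λ + (J:ℝ)*|lamP| + (J:ℝ)*|lamM| := by rw [hKdef, hΓ₁def]; ring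
    linarith
  linarith [hkeyu, hlbs, hp1, hp2, hKexp, hmlam]
· -- second norm inequality
  have hdec2 : ((coc f A (n - i) (f^[s] p))⁻¹ : X ≃L[ℝ] X)
      = coc f A s p * (coc f A m p)⁻¹ := by
    rw [hdec, mul_inv_rev, inv_inv]
  have hnorm2 : ‖(((coc f A (n - i) (f^[i] p))⁻¹ : X ≃L[ℝ] X) : X →L[ℝ] X)‖
      ≤ Real.exp (lA f A p s + lB f A p m) := by
    rw [hfi, hdec2]
    have hpos := gl_norm_pos ((coc f A s p * (coc f A m p)⁻¹ : X ≃L[ℝ] X))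
    rw [← Real.exp_log hpos]
    exact Real.exp_le_exp.mpr (gl_log_mul_le _ _)
  refine le_trans hnorm2 ?_
  have hrhs : ‖(((coc f A n p)⁻¹ : X ≃L[ℝ] X) : X →L[ℝ] X)‖ * Real.exp ((lamM + eps i) * i)
      = Real.exp (lB f A p n + (lamM + eps i) * i) := by
    rw [Real.exp_add]
    congr 1
    simp only [lB]
    rw [Real.exp_log (gl_norm_pos _)]
  rw [hrhs, Real.exp_le_exp]
  have e3 : lB f A p m = wv m - (m:ℝ)*lamM - C1 := by simp only [hwvdef]; ring
  have e4 : lB f A p n = wv n - (n:ℝ)*lamM - C1 := by simp only [hwvdef]; ring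
  have hx : (lamM + eps i) * (i:ℝ) = lamM * i + eps i * i := by ring
  rw [e3, e4, hx, hepsi]
  have hmlam : (m:ℝ)*lamM = (s:ℝ)*lamM + (n:ℝ)*lamM - (i:ℝ)*lamM := by
    rw [hcastm]; ring
  have hp1 : -((s:ℝ)*lamM) ≤ (J:ℝ)*|lamM| := by
    have u1 : -((s:ℝ)*lamM) ≤ (s:ℝ)*|lamM| := by
      have := mul_le_mul_of_nonneg_left (neg_abs_le lamM) hs0
      linarith
    have u2 : (s:ℝ)*|lamM| ≤ (J:ℝ)*|lamM| := mul_le_mul_of_nonneg_right hsR (abs_nonneg _)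
    linarith
  have hKexp : (J:ℝ)*|lamM| + (J:ℝ)*Λ ≤ K := by
    have h0 : (0:ℝ) ≤ (J:ℝ) * |lamP| := by positivity
    have h1 : K = (J:ℝ)*Λ + (J:ℝ)*|lamP| + (J:ℝ)*|lamM| := by rw [hKdef, hΓ₁def]; ring
    linarith
  linarith [hkeyv, hlas, hp1, hp2, hKexp, hmlam]


/-- **Corollary 4.9.** Along a set of times of upper density `> 1 − ρ`, the
norms of the cocycle along the periodic orbit of `p` satisfy the Gouëzel–Karlsson
subadditivity estimates. -/
theorem stmt10 {M : Type*} [MetricSpace M] [CompactSpace M]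
    {X : Type*} [NormedAddCommGroup X] [NormedSpace ℝ X] [CompleteSpace X]
    (f : M → M) (A : M → (X ≃L[ℝ] X))
    (p : M) (J : ℕ) (hJ : 0 < J) (hp : f^[J] p = p)
    (lamP lamM : ℝ)
    (hlamP : Tendsto (fun n : ℕ =>
      (n : ℝ)⁻¹ * Real.log ‖(coc f A n p : X →L[ℝ] X)‖) atTop (𝓝 lamP))
    (hlamM : Tendsto (fun n : ℕ =>
      (n : ℝ)⁻¹ * Real.log ‖(((coc f A n p)⁻¹ : X ≃L[ℝ] X) : X →L[ℝ] X)‖) atTop (𝓝 (-lamM)))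
    (ρ : ℝ) (hρ : 0 < ρ) :
    ∃ ε : ℕ → ℝ, (∀ i, 0 ≤ ε i) ∧ Tendsto ε atTop (𝓝 0) ∧
      ∃ Sp : Set ℕ, 1 - ρ < upperDens Sp ∧
        ∀ n ∈ Sp, ∀ i ≤ n,
          ‖(coc f A (n - i) (f^[i] p) : X →L[ℝ] X)‖ ≤
            ‖(coc f A n p : X →L[ℝ] X)‖ * Real.exp ((-lamP + ε i) * (i : ℝ)) ∧
          ‖(((coc f A (n - i) (f^[i] p))⁻¹ : X ≃L[ℝ] X) : X →L[ℝ] X)‖ ≤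
            ‖(((coc f A n p)⁻¹ : X ≃L[ℝ] X) : X →L[ℝ] X)‖ * Real.exp ((lamM + ε i) * (i : ℝ)) := by
  classical
  rcases subsingleton_or_nontrivial X with hX | hX
  · refine ⟨fun _ => 0, fun _ => le_refl 0, tendsto_const_nhds, Set.univ, ?_, ?_⟩
    · have hU : upperDens (Set.univ : Set ℕ) = 1 := by
        unfold upperDens
        have hEq : (fun N : ℕ => ((((Set.univ : Set ℕ)) ∩ Set.Iio N).ncard : ℝ) / N)
            =ᶠ[atTop] (fun _ => (1:ℝ)) := by
          filter_upwards [eventually_ge_atTop 1] with N hN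
          have hN0 : ((N:ℕ) : ℝ) ≠ 0 := by
            simp only [ne_eq, Nat.cast_eq_zero]; omega
          rw [Set.univ_inter, ncard_Iio_nat]
          exact div_self hN0
        rw [Filter.limsup_congr hEq, Filter.limsup_const]
      rw [hU]; linarith
    · intro n _ i _
      have hz : ∀ E : X ≃L[ℝ] X, ‖(E : X →L[ℝ] X)‖ = 0 := by
        intro E
        have h0 : (E : X →L[ℝ] X) = 0 := by
          ext x
          have hx : x = (0 : X) := Subsingleton.elim x 0
          simp [hx]
        rw [h0, norm_zero]
      constructor
      · rw [hz, hz, zero_mul]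
      · rw [hz, hz, zero_mul]
  · exact stmt10_aux f A p J hJ hp lamP lamM hlamP hlamM ρ hρ
end
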